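/- arXiv:1612.00332 — 6 statements merged into one kernel-verified Lean document; each statement's English description precedes it below -/
import Mathlib

section
/- For every classical solution u of the 1-D homogeneous wave equation on (-1,1) with homogeneous Dirichlet boundary conditions and every T > 0, the boundary trace satisfies the direct (hidden regularity) inequality ∫_0^T |u_x(1,t)|² dt ≤ (T+4)·E(u(0)). -/
open MeasureTheory Set

namespace DIW

noncomputable section

def S : Set (ℝ × ℝ) := Set.Icc (-1 : ℝ) 1 ×ˢ (Set.univ : Set ℝ)

variable (u : ℝ → ℝ → ℝ)

def U : ℝ × ℝ → ℝ := fun p => u p.1 p.2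

def D : ℝ × ℝ → (ℝ × ℝ) →L[ℝ] ℝ := fderivWithin ℝ (U u) S

def D2 : ℝ × ℝ → (ℝ × ℝ) →L[ℝ] (ℝ × ℝ) →L[ℝ] ℝ := fderivWithin ℝ (D u) S

lemma hSuniq : UniqueDiffOn ℝ S :=
  (uniqueDiffOn_Icc (by norm_num : (-1:ℝ) < 1)).prod uniqueDiffOn_univ

lemma memS {x t : ℝ} (hx : x ∈ Set.Icc (-1:ℝ) 1) : (x, t) ∈ S :=
  ⟨hx, mem_univ t⟩

set_option linter.unusedSectionVars false

section lines

variable {E : Type*} [NormedAddCommGroup E] [NormedSpace ℝ E]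

lemma lineT {G : ℝ × ℝ → E} {G' : (ℝ × ℝ) →L[ℝ] E} {x t : ℝ}
    (hx : x ∈ Set.Icc (-1:ℝ) 1) (h : HasFDerivWithinAt G G' S (x, t)) :
    HasDerivAt (fun τ => G (x, τ)) (G' (0, 1)) t := by
  have hline : HasDerivAt (fun τ : ℝ => ((x : ℝ), τ)) ((0 : ℝ), (1 : ℝ)) t := by
    simpa using (hasDerivAt_const t x).prodMk (hasDerivAt_id t)
  have hmaps : Set.MapsTo (fun τ : ℝ => ((x : ℝ), τ)) Set.univ S := fun τ _ => memS hx
  have := h.comp_hasDerivWithinAt (t := S) t (hline.hasDerivWithinAt (s := Set.univ)) hmaps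
  simpa [hasDerivWithinAt_univ, Function.comp_def] using this

lemma lineX {G : ℝ × ℝ → E} {G' : (ℝ × ℝ) →L[ℝ] E} {x t : ℝ}
    (h : HasFDerivWithinAt G G' S (x, t)) :
    HasDerivWithinAt (fun ξ => G (ξ, t)) (G' (1, 0)) (Set.Icc (-1:ℝ) 1) x := by
  have hline : HasDerivWithinAt (fun ξ : ℝ => (ξ, (t : ℝ))) ((1 : ℝ), (0 : ℝ))
      (Set.Icc (-1:ℝ) 1) x := by
    simpa using ((hasDerivAt_id x).prodMk (hasDerivAt_const x t)).hasDerivWithinAt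
      (s := Set.Icc (-1:ℝ) 1)
  exact h.comp_hasDerivWithinAt x hline (fun ξ hξ => memS hξ)

end lines

variable (hu : ContDiffOn ℝ 2 (U u) S)

include hu

lemma hD1 : ContDiffOn ℝ 1 (D u) S := hu.fderivWithin (hSuniq) (by norm_num)

lemma hD2cont : ContinuousOn (D2 u) S :=
  (hD1 u hu).continuousOn_fderivWithin (hSuniq) le_rfl

lemma hUdiff : ∀ p ∈ S, HasFDerivWithinAt (U u) (D u p) S p := fun p hp =>
  ((hu.differentiableOn (by norm_num)) p hp).hasFDerivWithinAt

lemma hDdiff : ∀ p ∈ S, HasFDerivWithinAt (D u) (D2 u p) S p := fun p hp =>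
  (((hD1 u hu).differentiableOn one_ne_zero) p hp).hasFDerivWithinAt

-- continuity of the directional derivatives
lemma cont_Dv (v : ℝ × ℝ) : ContinuousOn (fun p => D u p v) S :=
  (hD1 u hu).continuousOn.clm_apply continuousOn_const

lemma cont_D2vw (v w : ℝ × ℝ) : ContinuousOn (fun p => D2 u p v w) S :=
  ((hD2cont u hu).clm_apply continuousOn_const).clm_apply continuousOn_const

-- derivative of p ↦ D u p w in the t-direction
lemma hDt_apply {x t : ℝ} (hx : x ∈ Set.Icc (-1:ℝ) 1) (w : ℝ × ℝ) :
    HasDerivAt (fun τ => D u (x, τ) w) (D2 u (x, t) (0, 1) w) t := by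
  have h1 : HasDerivAt (fun τ => D u (x, τ)) (D2 u (x, t) (0, 1)) t :=
    lineT hx (hDdiff u hu (x, t) (memS hx))
  have h2 := ((ContinuousLinearMap.apply ℝ ℝ w).hasFDerivAt).comp_hasDerivAt t h1
  simpa [Function.comp_def] using h2

lemma hDx_apply {x t : ℝ} (hx : x ∈ Set.Icc (-1:ℝ) 1) (w : ℝ × ℝ) :
    HasDerivWithinAt (fun ξ => D u (ξ, t) w) (D2 u (x, t) (1, 0) w)
      (Set.Icc (-1:ℝ) 1) x := by
  have h1 : HasDerivWithinAt (fun ξ => D u (ξ, t)) (D2 u (x, t) (1, 0))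
      (Set.Icc (-1:ℝ) 1) x := lineX (hDdiff u hu (x, t) (memS hx))
  have h2 := ((ContinuousLinearMap.apply ℝ ℝ w).hasFDerivAt).comp_hasDerivWithinAt x h1
  simpa [Function.comp_def] using h2

-- symmetry of the second derivative at interior points
lemma hsymm {x t : ℝ} (hx : x ∈ Set.Ioo (-1:ℝ) 1) :
    D2 u (x, t) (0, 1) (1, 0) = D2 u (x, t) (1, 0) (0, 1) := by
  have hxI : x ∈ Set.Icc (-1:ℝ) 1 := Set.mem_Icc_of_Ioo hx
  have hint : (x, t) ∈ interior S := by
    rw [S, interior_prod_eq, interior_Icc, interior_univ]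
    exact ⟨hx, mem_univ t⟩
  have h := (hu.contDiffWithinAt (memS hxI)).isSymmSndFDerivWithinAt (by simp) (hSuniq)
    (subset_closure hint) (memS hxI)
  exact h (0, 1) (1, 0)

variable (ut ux utt uxx : ℝ → ℝ → ℝ)
variable (hut : ∀ x ∈ Set.Icc (-1 : ℝ) 1, ∀ t : ℝ, HasDerivAt (fun τ => u x τ) (ut x t) t)
variable (hutt : ∀ x ∈ Set.Icc (-1 : ℝ) 1, ∀ t : ℝ, HasDerivAt (fun τ => ut x τ) (utt x t) t)
variable (hux : ∀ t : ℝ, ∀ x ∈ Set.Icc (-1 : ℝ) 1,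
  HasDerivWithinAt (fun ξ => u ξ t) (ux x t) (Set.Icc (-1 : ℝ) 1) x)
variable (huxx : ∀ t : ℝ, ∀ x ∈ Set.Icc (-1 : ℝ) 1,
  HasDerivWithinAt (fun ξ => ux ξ t) (uxx x t) (Set.Icc (-1 : ℝ) 1) x)

include hut in
lemma ut_eq : ∀ x ∈ Set.Icc (-1:ℝ) 1, ∀ t : ℝ, ut x t = D u (x, t) (0, 1) := by
  intro x hx t
  have h1 : HasDerivAt (fun τ => u x τ) (D u (x, t) (0, 1)) t :=
    lineT hx (hUdiff u hu (x, t) (memS hx))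
  exact (hut x hx t).unique h1

include hux in
lemma ux_eq : ∀ x ∈ Set.Icc (-1:ℝ) 1, ∀ t : ℝ, ux x t = D u (x, t) (1, 0) := by
  intro x hx t
  have h1 : HasDerivWithinAt (fun ξ => u ξ t) (D u (x, t) (1, 0)) (Set.Icc (-1:ℝ) 1) x :=
    lineX (hUdiff u hu (x, t) (memS hx))
  have huniq : UniqueDiffWithinAt ℝ (Set.Icc (-1:ℝ) 1) x :=
    uniqueDiffOn_Icc (by norm_num : (-1:ℝ) < 1) x hx
  rw [← (hux t x hx).derivWithin huniq, ← h1.derivWithin huniq]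

include hut in
lemma huxt_D : ∀ x ∈ Set.Icc (-1:ℝ) 1, ∀ t : ℝ,
    HasDerivAt (fun τ => ut x τ) (D2 u (x, t) (0, 1) (0, 1)) t := by
  intro x hx t
  have h1 := hDt_apply u hu hx (t := t) (0, 1)
  exact h1.congr_of_eventuallyEq (Filter.Eventually.of_forall fun τ =>
    ut_eq u hu ut hut x hx τ)

include hut hutt in
lemma utt_eq : ∀ x ∈ Set.Icc (-1:ℝ) 1, ∀ t : ℝ, utt x t = D2 u (x, t) (0, 1) (0, 1) :=
  fun x hx t => (hutt x hx t).unique (huxt_D u hu ut hut x hx t)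

-- t-derivative of ux
include hux in
lemma hux_t : ∀ x ∈ Set.Icc (-1:ℝ) 1, ∀ t : ℝ,
    HasDerivAt (fun τ => ux x τ) (D2 u (x, t) (0, 1) (1, 0)) t := by
  intro x hx t
  have h1 := hDt_apply u hu hx (t := t) (1, 0)
  exact h1.congr_of_eventuallyEq (Filter.Eventually.of_forall fun τ =>
    ux_eq u hu ux hux x hx τ)

-- x-derivative of ut within Icc
include hut in
lemma hut_x : ∀ x ∈ Set.Icc (-1:ℝ) 1, ∀ t : ℝ,
    HasDerivWithinAt (fun ξ => ut ξ t) (D2 u (x, t) (1, 0) (0, 1))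
      (Set.Icc (-1:ℝ) 1) x := by
  intro x hx t
  have h1 := hDx_apply u hu hx (t := t) (0, 1)
  exact (h1.congr (fun ξ hξ => ut_eq u hu ut hut ξ hξ t) (ut_eq u hu ut hut x hx t))

include hux huxx in
lemma uxx_eq : ∀ x ∈ Set.Icc (-1:ℝ) 1, ∀ t : ℝ, uxx x t = D2 u (x, t) (1, 0) (1, 0) := by
  intro x hx t
  have h1 := hDx_apply u hu hx (t := t) (1, 0)
  have h2 : HasDerivWithinAt (fun ξ => ux ξ t) (D2 u (x, t) (1, 0) (1, 0))
      (Set.Icc (-1:ℝ) 1) x :=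
    h1.congr (fun ξ hξ => ux_eq u hu ux hux ξ hξ t) (ux_eq u hu ux hux x hx t)
  have huniq : UniqueDiffWithinAt ℝ (Set.Icc (-1:ℝ) 1) x :=
    uniqueDiffOn_Icc (by norm_num : (-1:ℝ) < 1) x hx
  rw [← (huxx t x hx).derivWithin huniq, ← h2.derivWithin huniq]

-- continuity of ut, ux, utt, uxx and mixed derivative on S
include hut in
lemma cont_ut : ContinuousOn (fun p : ℝ × ℝ => ut p.1 p.2) S :=
  (cont_Dv u hu (0,1)).congr (fun p hp => ut_eq u hu ut hut p.1 hp.1 p.2)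

include hux in
lemma cont_ux : ContinuousOn (fun p : ℝ × ℝ => ux p.1 p.2) S :=
  (cont_Dv u hu (1,0)).congr (fun p hp => ux_eq u hu ux hux p.1 hp.1 p.2)

include hut hutt in
lemma cont_utt : ContinuousOn (fun p : ℝ × ℝ => utt p.1 p.2) S :=
  (cont_D2vw u hu (0,1) (0,1)).congr
    (fun p hp => utt_eq u hu ut utt hut hutt p.1 hp.1 p.2)

include hux huxx in
lemma cont_uxx : ContinuousOn (fun p : ℝ × ℝ => uxx p.1 p.2) S :=
  (cont_D2vw u hu (1,0) (1,0)).congr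
    (fun p hp => uxx_eq u hu ux uxx hux huxx p.1 hp.1 p.2)


omit hu

-- boundary values of ut vanish
lemma bnd_ut (hbc : ∀ t : ℝ, u (-1) t = 0 ∧ u 1 t = 0)
    (hut : ∀ x ∈ Set.Icc (-1 : ℝ) 1, ∀ t : ℝ, HasDerivAt (fun τ => u x τ) (ut x t) t) :
    ∀ t : ℝ, ut (-1) t = 0 ∧ ut 1 t = 0 := by
  intro t
  constructor
  · have h1 := hut (-1) (by norm_num) t
    have h2 : (fun τ => u (-1) τ) = fun _ : ℝ => (0:ℝ) := funext fun τ => (hbc τ).1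
    rw [h2] at h1
    exact h1.unique (hasDerivAt_const t 0)
  · have h1 := hut 1 (by norm_num) t
    have h2 : (fun τ => u 1 τ) = fun _ : ℝ => (0:ℝ) := funext fun τ => (hbc τ).2
    rw [h2] at h1
    exact h1.unique (hasDerivAt_const t 0)

end

section helpers

-- continuity in a single variable from continuity on S
lemma contT {f : ℝ → ℝ → ℝ} (hf : ContinuousOn (fun p : ℝ × ℝ => f p.1 p.2) S)
    {x : ℝ} (hx : x ∈ Set.Icc (-1:ℝ) 1) : Continuous (fun t => f x t) :=
  hf.comp_continuous (continuous_const.prodMk continuous_id) (fun t => memS hx)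

lemma contX {f : ℝ → ℝ → ℝ} (hf : ContinuousOn (fun p : ℝ × ℝ => f p.1 p.2) S)
    (t : ℝ) : ContinuousOn (fun ξ => f ξ t) (Set.Icc (-1:ℝ) 1) :=
  hf.comp ((continuous_id.prodMk continuous_const).continuousOn)
    (fun ξ hξ => memS hξ)

lemma iiX {f : ℝ → ℝ} (h : ContinuousOn f (Set.Icc (-1:ℝ) 1)) :
    IntervalIntegrable f volume (-1) 1 := by
  apply ContinuousOn.intervalIntegrable
  rwa [Set.uIcc_of_le (by norm_num : (-1:ℝ) ≤ 1)]

lemma iiT {f : ℝ → ℝ} {c : ℝ} (hc : 0 ≤ c) (h : ContinuousOn f (Set.Icc (0:ℝ) c)) :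
    IntervalIntegrable f volume 0 c := by
  apply ContinuousOn.intervalIntegrable
  rwa [Set.uIcc_of_le hc]

-- Fubini on the box [-1,1] × [0,c]
lemma fubini_box {f : ℝ → ℝ → ℝ} {c : ℝ} (hc : 0 ≤ c)
    (hf : ContinuousOn (fun p : ℝ × ℝ => f p.1 p.2)
      (Set.Icc (-1:ℝ) 1 ×ˢ Set.Icc (0:ℝ) c)) :
    ∫ x in (-1:ℝ)..1, (∫ t in (0:ℝ)..c, f x t) =
      ∫ t in (0:ℝ)..c, (∫ x in (-1:ℝ)..1, f x t) := by
  have hint : IntegrableOn (Function.uncurry f)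
      (Set.Icc (-1:ℝ) 1 ×ˢ Set.Icc (0:ℝ) c) (volume.prod volume) :=
    hf.integrableOn_compact (isCompact_Icc.prod isCompact_Icc)
  have hint2 : Integrable (Function.uncurry f)
      ((volume.restrict (Set.Ioc (-1:ℝ) 1)).prod (volume.restrict (Set.Ioc (0:ℝ) c))) := by
    rw [Measure.prod_restrict]
    exact hint.mono_set (Set.prod_mono Set.Ioc_subset_Icc_self Set.Ioc_subset_Icc_self)
  have hswap := MeasureTheory.integral_integral_swap hint2
  rw [intervalIntegral.integral_of_le (by norm_num : (-1:ℝ) ≤ 1),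
    intervalIntegral.integral_of_le hc]
  rw [show (fun t => ∫ x in (-1:ℝ)..1, f x t) = fun t => ∫ x in Set.Ioc (-1:ℝ) 1, f x t from
    funext fun t => intervalIntegral.integral_of_le (by norm_num : (-1:ℝ) ≤ 1)]
  rw [show (fun x => ∫ t in (0:ℝ)..c, f x t) = fun x => ∫ t in Set.Ioc (0:ℝ) c, f x t from
    funext fun x => intervalIntegral.integral_of_le hc]
  exact hswap

end helpers

section core

set_option linter.unusedSectionVars false

variable (u ut ux utt uxx : ℝ → ℝ → ℝ)
variable (hu : ContDiffOn ℝ 2 (U u) S)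
variable (hut : ∀ x ∈ Set.Icc (-1 : ℝ) 1, ∀ t : ℝ, HasDerivAt (fun τ => u x τ) (ut x t) t)
variable (hutt : ∀ x ∈ Set.Icc (-1 : ℝ) 1, ∀ t : ℝ, HasDerivAt (fun τ => ut x τ) (utt x t) t)
variable (hux : ∀ t : ℝ, ∀ x ∈ Set.Icc (-1 : ℝ) 1,
  HasDerivWithinAt (fun ξ => u ξ t) (ux x t) (Set.Icc (-1 : ℝ) 1) x)
variable (huxx : ∀ t : ℝ, ∀ x ∈ Set.Icc (-1 : ℝ) 1,
  HasDerivWithinAt (fun ξ => ux ξ t) (uxx x t) (Set.Icc (-1 : ℝ) 1) x)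
variable (hwave : ∀ x ∈ Set.Ioo (-1 : ℝ) 1, ∀ t : ℝ, utt x t = uxx x t)
variable (hbc : ∀ t : ℝ, u (-1) t = 0 ∧ u 1 t = 0)

include hu hut hutt hux huxx hwave hbc

-- continuity of the energy-flux integrand on S
lemma cont_g : ContinuousOn
    (fun p : ℝ × ℝ => ut p.1 p.2 * utt p.1 p.2 + ux p.1 p.2 * D2 u (p.1, p.2) (0,1) (1,0)) S :=
  ((cont_ut u hu ut hut).mul (cont_utt u hu ut utt hut hutt)).add
    ((cont_ux u hu ux hux).mul (cont_D2vw u hu (0,1) (1,0)))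

-- t-derivative of the energy density
lemma e_deriv_t {x : ℝ} (hx : x ∈ Set.Icc (-1:ℝ) 1) (t : ℝ) :
    HasDerivAt (fun τ => (ut x τ^2 + ux x τ^2)/2)
      (ut x t * utt x t + ux x t * D2 u (x,t) (0,1) (1,0)) t := by
  have h1 := ((hutt x hx t).pow 2).add ((hux_t u hu ux hux x hx t).pow 2)
  have h2 := h1.div_const 2
  exact h2.congr_deriv (by push_cast; ring)

-- the inner x-integral in the energy computation vanishes
lemma inner_energy (t : ℝ) :
    ∫ x in (-1:ℝ)..1,
      (ut x t * utt x t + ux x t * D2 u (x,t) (0,1) (1,0)) = 0 := by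
  have hcont : ContinuousOn (fun x => ut x t * ux x t) (Set.Icc (-1:ℝ) 1) :=
    (contX (cont_ut u hu ut hut) t).mul (contX (cont_ux u hu ux hux) t)
  have hderiv : ∀ x ∈ Set.Ioo (-1:ℝ) 1,
      HasDerivWithinAt (fun ξ => ut ξ t * ux ξ t)
        (ut x t * utt x t + ux x t * D2 u (x,t) (0,1) (1,0)) (Set.Ioi x) x := by
    intro x hx
    have hxI : x ∈ Set.Icc (-1:ℝ) 1 := Set.mem_Icc_of_Ioo hx
    have hnb : Set.Icc (-1:ℝ) 1 ∈ nhds x := Icc_mem_nhds hx.1 hx.2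
    have h1 : HasDerivAt (fun ξ => ut ξ t) (D2 u (x,t) (1,0) (0,1)) x :=
      (hut_x u hu ut hut x hxI t).hasDerivAt hnb
    have h2 : HasDerivAt (fun ξ => ux ξ t) (uxx x t) x :=
      (huxx t x hxI).hasDerivAt hnb
    have h3 := h1.mul h2
    have heq : ut x t * utt x t + ux x t * D2 u (x,t) (0,1) (1,0)
        = D2 u (x,t) (1,0) (0,1) * ux x t + ut x t * uxx x t := by
      rw [hwave x hx t, hsymm u hu hx]; ring
    rw [heq]
    exact h3.hasDerivWithinAt
  have hint : IntervalIntegrable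
      (fun x => ut x t * utt x t + ux x t * D2 u (x,t) (0,1) (1,0)) volume (-1) 1 :=
    iiX (contX (f := fun x s => ut x s * utt x s + ux x s * D2 u (x, s) (0,1) (1,0)) (cont_g u ut ux utt uxx hu hut hutt hux huxx hwave hbc) t)
  have := intervalIntegral.integral_eq_sub_of_hasDeriv_right_of_le
    (by norm_num : (-1:ℝ) ≤ 1) hcont hderiv hint
  rw [this, (bnd_ut u ut hbc hut t).1, (bnd_ut u ut hbc hut t).2]
  ring

-- conservation of energy
lemma energy_const {t : ℝ} (ht : 0 ≤ t) :
    ∫ x in (-1:ℝ)..1, (ut x t^2 + ux x t^2)/2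
      = ∫ x in (-1:ℝ)..1, (ut x 0^2 + ux x 0^2)/2 := by
  have hftc : ∀ x ∈ Set.Icc (-1:ℝ) 1,
      (ut x t^2 + ux x t^2)/2 - (ut x 0^2 + ux x 0^2)/2
        = ∫ s in (0:ℝ)..t, (ut x s * utt x s + ux x s * D2 u (x,s) (0,1) (1,0)) := by
    intro x hx
    rw [intervalIntegral.integral_eq_sub_of_hasDerivAt
      (fun s _ => e_deriv_t u ut ux utt uxx hu hut hutt hux huxx hwave hbc hx s)
      (iiT ht (contT (f := fun x s => ut x s * utt x s + ux x s * D2 u (x, s) (0,1) (1,0)) (cont_g u ut ux utt uxx hu hut hutt hux huxx hwave hbc) hx).continuousOn)]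
  have hsub : (∫ x in (-1:ℝ)..1, (ut x t^2 + ux x t^2)/2)
      - ∫ x in (-1:ℝ)..1, (ut x 0^2 + ux x 0^2)/2
      = ∫ x in (-1:ℝ)..1, ((ut x t^2 + ux x t^2)/2 - (ut x 0^2 + ux x 0^2)/2) := by
    rw [intervalIntegral.integral_sub]
    · exact iiX ((((contX (cont_ut u hu ut hut) t).pow 2).add
        ((contX (cont_ux u hu ux hux) t).pow 2)).div_const 2)
    · exact iiX ((((contX (cont_ut u hu ut hut) 0).pow 2).add
        ((contX (cont_ux u hu ux hux) 0).pow 2)).div_const 2)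
  rw [← sub_eq_zero, hsub,
    intervalIntegral.integral_congr (g := fun x => ∫ s in (0:ℝ)..t,
      (ut x s * utt x s + ux x s * D2 u (x,s) (0,1) (1,0)))
      (fun x hx => hftc x (by rwa [Set.uIcc_of_le (by norm_num : (-1:ℝ) ≤ 1)] at hx)),
    fubini_box ht ((cont_g u ut ux utt uxx hu hut hutt hux huxx hwave hbc).mono
      (fun p hp => memS hp.1))]
  rw [intervalIntegral.integral_congr (g := fun _ => (0:ℝ))
    (fun s _ => inner_energy u ut ux utt uxx hu hut hutt hux huxx hwave hbc s)]
  simp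


-- continuity of the q-flux integrand on S
lemma cont_h : ContinuousOn
    (fun p : ℝ × ℝ => (p.1+1)/2 * (D2 u (p.1, p.2) (0,1) (1,0) * ut p.1 p.2
      + ux p.1 p.2 * utt p.1 p.2)) S :=
  (((continuous_fst.add continuous_const).div_const 2).continuousOn).mul
    (((cont_D2vw u hu (0,1) (1,0)).mul (cont_ut u hu ut hut)).add
      ((cont_ux u hu ux hux).mul (cont_utt u hu ut utt hut hutt)))

-- t-derivative of the multiplier density q
lemma q_deriv {x : ℝ} (hx : x ∈ Set.Icc (-1:ℝ) 1) (t : ℝ) :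
    HasDerivAt (fun τ => (x+1)/2 * (ux x τ * ut x τ))
      ((x+1)/2 * (D2 u (x,t) (0,1) (1,0) * ut x t + ux x t * utt x t)) t :=
  ((hux_t u hu ux hux x hx t).mul (hutt x hx t)).const_mul ((x+1)/2)

-- the inner x-integral in the main computation
lemma inner_main (t : ℝ) :
    ∫ x in (-1:ℝ)..1,
      ((x+1)/2 * (D2 u (x,t) (0,1) (1,0) * ut x t + ux x t * utt x t)
        + (ut x t^2 + ux x t^2)/4) = (ux 1 t)^2 / 2 := by
  have hcont : ContinuousOn (fun x => (x+1)/2 * ((ut x t^2 + ux x t^2)/2))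
      (Set.Icc (-1:ℝ) 1) :=
    (((continuous_id.add continuous_const).div_const 2).continuousOn).mul
      ((((contX (cont_ut u hu ut hut) t).pow 2).add
        ((contX (cont_ux u hu ux hux) t).pow 2)).div_const 2)
  have hderiv : ∀ x ∈ Set.Ioo (-1:ℝ) 1,
      HasDerivWithinAt (fun ξ => (ξ+1)/2 * ((ut ξ t^2 + ux ξ t^2)/2))
        ((x+1)/2 * (D2 u (x,t) (0,1) (1,0) * ut x t + ux x t * utt x t)
          + (ut x t^2 + ux x t^2)/4) (Set.Ioi x) x := by
    intro x hx
    have hxI : x ∈ Set.Icc (-1:ℝ) 1 := Set.mem_Icc_of_Ioo hx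
    have hnb : Set.Icc (-1:ℝ) 1 ∈ nhds x := Icc_mem_nhds hx.1 hx.2
    have h1 : HasDerivAt (fun ξ => ut ξ t) (D2 u (x,t) (1,0) (0,1)) x :=
      (hut_x u hu ut hut x hxI t).hasDerivAt hnb
    have h2 : HasDerivAt (fun ξ => ux ξ t) (uxx x t) x :=
      (huxx t x hxI).hasDerivAt hnb
    have hm : HasDerivAt (fun ξ : ℝ => (ξ+1)/2) (1/2) x := by
      simpa using ((hasDerivAt_id x).add_const 1).div_const 2
    have he : HasDerivAt (fun ξ => (ut ξ t^2 + ux ξ t^2)/2)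
        ((2 * ut x t ^ 1 * D2 u (x,t) (1,0) (0,1) + 2 * ux x t ^ 1 * uxx x t)/2) x := by
      have := ((h1.pow 2).add (h2.pow 2)).div_const 2
      exact this.congr_deriv (by norm_num)
    have hprod := hm.mul he
    have heq : (x+1)/2 * (D2 u (x,t) (0,1) (1,0) * ut x t + ux x t * utt x t)
        + (ut x t^2 + ux x t^2)/4
        = 1/2 * ((ut x t^2 + ux x t^2)/2) + (x+1)/2 *
          ((2 * ut x t ^ 1 * D2 u (x,t) (1,0) (0,1) + 2 * ux x t ^ 1 * uxx x t)/2) := by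
      rw [hwave x hx t, hsymm u hu hx]
      ring
    rw [heq]
    exact hprod.hasDerivWithinAt
  have hint : IntervalIntegrable
      (fun x => (x+1)/2 * (D2 u (x,t) (0,1) (1,0) * ut x t + ux x t * utt x t)
        + (ut x t^2 + ux x t^2)/4) volume (-1) 1 := by
    apply iiX
    exact (contX (f := fun x s => (x+1)/2 * (D2 u (x, s) (0,1) (1,0) * ut x s
        + ux x s * utt x s))
      (cont_h u ut ux utt uxx hu hut hutt hux huxx hwave hbc) t).add
      ((((contX (cont_ut u hu ut hut) t).pow 2).add
        ((contX (cont_ux u hu ux hux) t).pow 2)).div_const 4)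
  have := intervalIntegral.integral_eq_sub_of_hasDeriv_right_of_le
    (by norm_num : (-1:ℝ) ≤ 1) hcont hderiv hint
  rw [this, (bnd_ut u ut hbc hut t).2]
  norm_num

end core
end DIW

open DIW

theorem direct_inequality_wave
    (u ut ux utt uxx : ℝ → ℝ → ℝ)
    -- u is C² on [-1,1] × ℝ
    (hu : ContDiffOn ℝ 2 (fun p : ℝ × ℝ => u p.1 p.2)
      (Set.Icc (-1 : ℝ) 1 ×ˢ (Set.univ : Set ℝ)))
    -- ut, utt are the first and second time derivatives of u
    (hut : ∀ x ∈ Set.Icc (-1 : ℝ) 1, ∀ t : ℝ,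
      HasDerivAt (fun τ => u x τ) (ut x t) t)
    (hutt : ∀ x ∈ Set.Icc (-1 : ℝ) 1, ∀ t : ℝ,
      HasDerivAt (fun τ => ut x τ) (utt x t) t)
    -- ux, uxx are the first and second space derivatives of u (one-sided at ±1)
    (hux : ∀ t : ℝ, ∀ x ∈ Set.Icc (-1 : ℝ) 1,
      HasDerivWithinAt (fun ξ => u ξ t) (ux x t) (Set.Icc (-1 : ℝ) 1) x)
    (huxx : ∀ t : ℝ, ∀ x ∈ Set.Icc (-1 : ℝ) 1,
      HasDerivWithinAt (fun ξ => ux ξ t) (uxx x t) (Set.Icc (-1 : ℝ) 1) x)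
    -- the wave equation u_tt = u_xx on (-1,1) × ℝ
    (hwave : ∀ x ∈ Set.Ioo (-1 : ℝ) 1, ∀ t : ℝ, utt x t = uxx x t)
    -- homogeneous Dirichlet boundary conditions
    (hbc : ∀ t : ℝ, u (-1) t = 0 ∧ u 1 t = 0) :
    ∀ T : ℝ, 0 < T →
      (∫ t in (0 : ℝ)..T, (ux 1 t) ^ 2)
        ≤ (T + 4) * ((1 / 2) * ∫ x in (-1 : ℝ)..1, ((ut x 0) ^ 2 + (ux x 0) ^ 2)) := by
  intro T hT
  have hu' : ContDiffOn ℝ 2 (DIW.U u) DIW.S := hu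
  -- shorthand for the energy at time 0
  set E0 : ℝ := ∫ x in (-1:ℝ)..1, (ut x 0^2 + ux x 0^2)/2 with hE0def
  -- continuity of the multiplier density in x at fixed time
  have cqx : ∀ s : ℝ, ContinuousOn (fun x => (x+1)/2 * (ux x s * ut x s))
      (Set.Icc (-1:ℝ) 1) := fun s =>
    (((continuous_id.add continuous_const).div_const 2).continuousOn).mul
      ((contX (cont_ux u hu' ux hux) s).mul (contX (cont_ut u hu' ut hut) s))
  -- energy density continuity in x at fixed time
  have cex : ∀ s : ℝ, ContinuousOn (fun x => (ut x s^2 + ux x s^2)/2)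
      (Set.Icc (-1:ℝ) 1) := fun s =>
    (((contX (cont_ut u hu' ut hut) s).pow 2).add
      ((contX (cont_ux u hu' ux hux) s).pow 2)).div_const 2
  have hE0nn : 0 ≤ E0 := intervalIntegral.integral_nonneg (by norm_num)
    (fun x _ => by positivity)
  -- the key identity
  have key : (∫ x in (-1:ℝ)..1,
        ((x+1)/2 * (ux x T * ut x T) - (x+1)/2 * (ux x 0 * ut x 0)))
      = (∫ t in (0:ℝ)..T, (ux 1 t)^2 / 2) - T * (E0/2) := by
    have hftc : ∀ x ∈ Set.Icc (-1:ℝ) 1,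
        (x+1)/2 * (ux x T * ut x T) - (x+1)/2 * (ux x 0 * ut x 0)
          = ∫ t in (0:ℝ)..T,
            (x+1)/2 * (D2 u (x,t) (0,1) (1,0) * ut x t + ux x t * utt x t) := by
      intro x hx
      rw [intervalIntegral.integral_eq_sub_of_hasDerivAt
        (fun s _ => q_deriv u ut ux utt uxx hu' hut hutt hux huxx hwave hbc hx s)
        (iiT hT.le (contT (f := fun x s => (x+1)/2 *
            (D2 u (x, s) (0,1) (1,0) * ut x s + ux x s * utt x s))
          (cont_h u ut ux utt uxx hu' hut hutt hux huxx hwave hbc) hx).continuousOn)]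
    have hinner : ∀ t ∈ Set.Icc (0:ℝ) T,
        (∫ x in (-1:ℝ)..1,
          (x+1)/2 * (D2 u (x,t) (0,1) (1,0) * ut x t + ux x t * utt x t))
        = (ux 1 t)^2/2 - E0/2 := by
      intro t ht
      have hint1 : IntervalIntegrable (fun x =>
          (x+1)/2 * (D2 u (x,t) (0,1) (1,0) * ut x t + ux x t * utt x t)
            + (ut x t^2 + ux x t^2)/4) volume (-1) 1 :=
        iiX ((contX (f := fun x s => (x+1)/2 *
            (D2 u (x, s) (0,1) (1,0) * ut x s + ux x s * utt x s))
          (cont_h u ut ux utt uxx hu' hut hutt hux huxx hwave hbc) t).add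
          ((((contX (cont_ut u hu' ut hut) t).pow 2).add
            ((contX (cont_ux u hu' ux hux) t).pow 2)).div_const 4))
      have hint2 : IntervalIntegrable (fun x => (ut x t^2 + ux x t^2)/4)
          volume (-1) 1 :=
        iiX ((((contX (cont_ut u hu' ut hut) t).pow 2).add
          ((contX (cont_ux u hu' ux hux) t).pow 2)).div_const 4)
      calc (∫ x in (-1:ℝ)..1,
            (x+1)/2 * (D2 u (x,t) (0,1) (1,0) * ut x t + ux x t * utt x t))
          = ∫ x in (-1:ℝ)..1,
            (((x+1)/2 * (D2 u (x,t) (0,1) (1,0) * ut x t + ux x t * utt x t)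
              + (ut x t^2 + ux x t^2)/4) - (ut x t^2 + ux x t^2)/4) :=
          intervalIntegral.integral_congr (fun x _ => by ring)
        _ = (∫ x in (-1:ℝ)..1,
            ((x+1)/2 * (D2 u (x,t) (0,1) (1,0) * ut x t + ux x t * utt x t)
              + (ut x t^2 + ux x t^2)/4))
            - ∫ x in (-1:ℝ)..1, (ut x t^2 + ux x t^2)/4 :=
          intervalIntegral.integral_sub hint1 hint2
        _ = (ux 1 t)^2/2 - ∫ x in (-1:ℝ)..1, (ut x t^2 + ux x t^2)/4 := by
          rw [inner_main u ut ux utt uxx hu' hut hutt hux huxx hwave hbc t]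
        _ = (ux 1 t)^2/2 - E0/2 := by
          have h4 : (fun x => (ut x t^2 + ux x t^2)/4)
              = fun x => ((ut x t^2 + ux x t^2)/2)/2 := funext fun x => by ring
          rw [h4, intervalIntegral.integral_div,
            energy_const u ut ux utt uxx hu' hut hutt hux huxx hwave hbc ht.1]
    have hI1 : IntervalIntegrable (fun t => (ux 1 t)^2/2) volume 0 T :=
      iiT hT.le ((((contT (cont_ux u hu' ux hux)
        (by norm_num : (1:ℝ) ∈ Set.Icc (-1:ℝ) 1)).pow 2).div_const 2).continuousOn)
    calc (∫ x in (-1:ℝ)..1,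
          ((x+1)/2 * (ux x T * ut x T) - (x+1)/2 * (ux x 0 * ut x 0)))
        = ∫ x in (-1:ℝ)..1, (∫ t in (0:ℝ)..T,
            (x+1)/2 * (D2 u (x,t) (0,1) (1,0) * ut x t + ux x t * utt x t)) :=
        intervalIntegral.integral_congr (fun x hx => hftc x
          (by rwa [Set.uIcc_of_le (by norm_num : (-1:ℝ) ≤ 1)] at hx))
      _ = ∫ t in (0:ℝ)..T, (∫ x in (-1:ℝ)..1,
            (x+1)/2 * (D2 u (x,t) (0,1) (1,0) * ut x t + ux x t * utt x t)) :=
        fubini_box hT.le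
          ((cont_h u ut ux utt uxx hu' hut hutt hux huxx hwave hbc).mono
            (fun p hp => memS hp.1))
      _ = ∫ t in (0:ℝ)..T, ((ux 1 t)^2/2 - E0/2) :=
        intervalIntegral.integral_congr (fun t ht => hinner t
          (by rwa [Set.uIcc_of_le hT.le] at ht))
      _ = (∫ t in (0:ℝ)..T, (ux 1 t)^2/2) - ∫ t in (0:ℝ)..T, (E0/2 : ℝ) :=
        intervalIntegral.integral_sub hI1 intervalIntegrable_const
      _ = (∫ t in (0:ℝ)..T, (ux 1 t)^2 / 2) - T * (E0/2) := by
        rw [intervalIntegral.integral_const]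
        simp [smul_eq_mul]
  -- bound the multiplier integrals by the energy
  have habs : ∀ s : ℝ, 0 ≤ s →
      |∫ x in (-1:ℝ)..1, (x+1)/2 * (ux x s * ut x s)| ≤ E0 := by
    intro s hs
    have hpt : ∀ x ∈ Set.Icc (-1:ℝ) 1,
        |(x+1)/2 * (ux x s * ut x s)| ≤ (ut x s^2 + ux x s^2)/2 := by
      intro x hx
      have h1 : |(x+1)/2| ≤ 1 :=
        abs_le.2 ⟨by linarith [hx.1], by linarith [hx.2]⟩
      have h2 : |ux x s * ut x s| ≤ (ut x s^2 + ux x s^2)/2 :=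
        abs_le.2 ⟨by nlinarith [sq_nonneg (ux x s + ut x s)],
          by nlinarith [sq_nonneg (ux x s - ut x s)]⟩
      calc |(x+1)/2 * (ux x s * ut x s)|
          = |(x+1)/2| * |ux x s * ut x s| := abs_mul _ _
        _ ≤ 1 * ((ut x s^2 + ux x s^2)/2) :=
          mul_le_mul h1 h2 (abs_nonneg _) zero_le_one
        _ = (ut x s^2 + ux x s^2)/2 := one_mul _
    calc |∫ x in (-1:ℝ)..1, (x+1)/2 * (ux x s * ut x s)|
        ≤ ∫ x in (-1:ℝ)..1, |(x+1)/2 * (ux x s * ut x s)| :=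
        intervalIntegral.abs_integral_le_integral_abs (by norm_num)
      _ ≤ ∫ x in (-1:ℝ)..1, (ut x s^2 + ux x s^2)/2 :=
        intervalIntegral.integral_mono_on (by norm_num)
          (iiX (cqx s).abs) (iiX (cex s)) hpt
      _ = E0 := energy_const u ut ux utt uxx hu' hut hutt hux huxx hwave hbc hs
  -- split the left side of `key`
  have hsplitT : (∫ x in (-1:ℝ)..1,
        ((x+1)/2 * (ux x T * ut x T) - (x+1)/2 * (ux x 0 * ut x 0)))
      = (∫ x in (-1:ℝ)..1, (x+1)/2 * (ux x T * ut x T))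
        - ∫ x in (-1:ℝ)..1, (x+1)/2 * (ux x 0 * ut x 0) :=
    intervalIntegral.integral_sub (iiX (cqx T)) (iiX (cqx 0))
  have hbT := habs T hT.le
  have hb0 := habs 0 le_rfl
  have habsT := abs_le.1 hbT
  have habs0 := abs_le.1 hb0
  -- relate halves
  have hhalf : (∫ t in (0:ℝ)..T, (ux 1 t)^2 / 2)
      = (∫ t in (0:ℝ)..T, (ux 1 t)^2) / 2 := intervalIntegral.integral_div 2 _
  have hER : (1 / 2 : ℝ) * (∫ x in (-1:ℝ)..1, ((ut x 0)^2 + (ux x 0)^2)) = E0 := by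
    rw [hE0def, show (fun x => (ut x 0^2 + ux x 0^2)/2)
      = fun x => (ut x 0^2 + ux x 0^2)/2 from rfl]
    rw [intervalIntegral.integral_div]
    ring
  rw [hER]
  rw [hsplitT, hhalf] at key
  nlinarith [key, habsT.1, habsT.2, habs0.1, habs0.2, hE0nn, hT.le]
end

section
/- For every classical solution u of the 1-D homogeneous wave equation on (-1,1) with homogeneous Dirichlet boundary conditions, at the critical observation time T = 4 the boundary observation exactly equals a fixed multiple of the energy: ∫_0^4 |u_x(1,t)|² dt = 4·E(u(0)). In particular the observability and direct inequalities at T = 4 hold with the same constant and are equalities. -/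
open MeasureTheory Set Topology Filter

private lemma constIcc_aux {h : ℝ → ℝ} {a b : ℝ} (hab : a < b)
    (hc : ContinuousOn h (Icc a b))
    (hd : ∀ s ∈ Ioo a b, HasDerivAt h 0 s) :
    ∀ s ∈ Icc a b, ∀ s' ∈ Icc a b, h s = h s' := by
  have hIoo : ∀ s ∈ Ioo a b, ∀ s' ∈ Ioo a b, h s = h s' := by
    intro s hs s' hs'
    refine (convex_Ioo a b).is_const_of_fderivWithin_eq_zero
      (fun z hz => ((hd z hz).differentiableAt).differentiableWithinAt) ?_ hs hs'
    intro z hz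
    rw [fderivWithin_of_isOpen isOpen_Ioo hz, (hd z hz).hasFDerivAt.fderiv]
    refine ContinuousLinearMap.ext fun y => ?_
    simp
  have hmIoo : (a+b)/2 ∈ Ioo a b := ⟨by linarith, by linarith⟩
  have key : ∀ s ∈ Icc a b, h s = h ((a+b)/2) := by
    intro s hs
    have hne : (𝓝[Ioo a b] s).NeBot := by
      rw [mem_closure_iff_nhdsWithin_neBot.symm, closure_Ioo hab.ne]
      exact hs
    have t1 : Filter.Tendsto h (𝓝[Ioo a b] s) (𝓝 (h s)) :=
      (hc s hs).mono Ioo_subset_Icc_self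
    have t2 : Filter.Tendsto h (𝓝[Ioo a b] s) (𝓝 (h ((a+b)/2))) := by
      refine Filter.Tendsto.congr' ?_ tendsto_const_nhds
      filter_upwards [self_mem_nhdsWithin] with z hz
      exact (hIoo z hz _ hmIoo).symm
    exact tendsto_nhds_unique t1 t2
  intro s hs s' hs'
  rw [key s hs, key s' hs']

theorem observability_equality_at_T4_wave
    (u ut ux utt uxx : ℝ → ℝ → ℝ)
    -- u is C² on [-1,1] × ℝ
    (hu : ContDiffOn ℝ 2 (fun p : ℝ × ℝ => u p.1 p.2)
      (Set.Icc (-1 : ℝ) 1 ×ˢ (Set.univ : Set ℝ)))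
    -- ut, utt are the first and second time derivatives of u
    (hut : ∀ x ∈ Set.Icc (-1 : ℝ) 1, ∀ t : ℝ,
      HasDerivAt (fun τ => u x τ) (ut x t) t)
    (hutt : ∀ x ∈ Set.Icc (-1 : ℝ) 1, ∀ t : ℝ,
      HasDerivAt (fun τ => ut x τ) (utt x t) t)
    -- ux, uxx are the first and second space derivatives of u (one-sided at ±1)
    (hux : ∀ t : ℝ, ∀ x ∈ Set.Icc (-1 : ℝ) 1,
      HasDerivWithinAt (fun ξ => u ξ t) (ux x t) (Set.Icc (-1 : ℝ) 1) x)
    (huxx : ∀ t : ℝ, ∀ x ∈ Set.Icc (-1 : ℝ) 1,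
      HasDerivWithinAt (fun ξ => ux ξ t) (uxx x t) (Set.Icc (-1 : ℝ) 1) x)
    -- the wave equation u_tt = u_xx on (-1,1) × ℝ
    (hwave : ∀ x ∈ Set.Ioo (-1 : ℝ) 1, ∀ t : ℝ, utt x t = uxx x t)
    -- homogeneous Dirichlet boundary conditions
    (hbc : ∀ t : ℝ, u (-1) t = 0 ∧ u 1 t = 0) :
    (∫ t in (0 : ℝ)..4, (ux 1 t) ^ 2)
      = 4 * ((1 / 2) * ∫ x in (-1 : ℝ)..1, ((ut x 0) ^ 2 + (ux x 0) ^ 2)) := by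
  have one_mem : (1:ℝ) ∈ Icc (-1:ℝ) 1 := by norm_num
  have negone_mem : (-1:ℝ) ∈ Icc (-1:ℝ) 1 := by norm_num
  set D : Set (ℝ × ℝ) := Set.Icc (-1 : ℝ) 1 ×ˢ (Set.univ : Set ℝ) with hDdef
  set U : ℝ × ℝ → ℝ := fun p : ℝ × ℝ => u p.1 p.2 with hUdef
  have hIcc_ud : UniqueDiffOn ℝ (Icc (-1:ℝ) 1) := uniqueDiffOn_Icc (by norm_num)
  have hDud : UniqueDiffOn ℝ D := hIcc_ud.prod uniqueDiffOn_univ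
  set F : ℝ × ℝ → (ℝ × ℝ) →L[ℝ] ℝ := fun p => fderivWithin ℝ U D p with hFdef
  have hUd : DifferentiableOn ℝ U D := hu.differentiableOn (by norm_num)
  have hFc : ContDiffOn ℝ 1 F D := hu.fderivWithin hDud (by norm_num)
  have hFd : DifferentiableOn ℝ F D := hFc.differentiableOn (by norm_num)
  have hmemD : ∀ {x t : ℝ}, x ∈ Icc (-1:ℝ) 1 → ((x, t) : ℝ × ℝ) ∈ D :=
    fun hx => ⟨hx, mem_univ _⟩
  -- first derivative identifications
  have hFx : ∀ x ∈ Icc (-1:ℝ) 1, ∀ t : ℝ, F (x,t) (1,0) = ux x t := by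
    intro x hx t
    have hdU : HasFDerivWithinAt U (F (x,t)) D (x,t) := (hUd _ (hmemD hx)).hasFDerivWithinAt
    have hγ : HasDerivWithinAt (fun ξ : ℝ => ((ξ, t) : ℝ × ℝ)) ((1:ℝ),(0:ℝ))
        (Icc (-1:ℝ) 1) x := (HasDerivAt.prodMk (hasDerivAt_id x) (hasDerivAt_const x t)).hasDerivWithinAt
    have hcomp := hdU.comp_hasDerivWithinAt x hγ (fun ξ hξ => hmemD hξ)
    have h2 : HasDerivWithinAt (fun ξ => u ξ t) (F (x,t) (1,0)) (Icc (-1:ℝ) 1) x := hcomp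
    exact (h2.derivWithin (hIcc_ud x hx)).symm.trans ((hux t x hx).derivWithin (hIcc_ud x hx))
  have hFt : ∀ x ∈ Icc (-1:ℝ) 1, ∀ t : ℝ, F (x,t) (0,1) = ut x t := by
    intro x hx t
    have hdU : HasFDerivWithinAt U (F (x,t)) D (x,t) := (hUd _ (hmemD hx)).hasFDerivWithinAt
    have hγ : HasDerivWithinAt (fun τ : ℝ => ((x, τ) : ℝ × ℝ)) ((0:ℝ),(1:ℝ))
        (univ : Set ℝ) t := (HasDerivAt.prodMk (hasDerivAt_const t x) (hasDerivAt_id t)).hasDerivWithinAt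
    have hcomp := hdU.comp_hasDerivWithinAt t hγ (fun τ _ => hmemD hx)
    have h2 : HasDerivAt (fun τ => u x τ) (F (x,t) (0,1)) t := by
      have h3 : HasDerivWithinAt (fun τ => u x τ) (F (x,t) (0,1)) univ t := hcomp
      rwa [hasDerivWithinAt_univ] at h3
    exact h2.unique (hut x hx t)
  -- boundary time derivatives vanish
  have hut1 : ∀ t : ℝ, ut 1 t = 0 := by
    intro t
    have h2 : HasDerivAt (fun τ => u 1 τ) 0 t := by
      have he : (fun τ => u 1 τ) = fun _ => (0:ℝ) := funext fun τ => (hbc τ).2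
      rw [he]; exact hasDerivAt_const t 0
    exact (hut 1 one_mem t).unique h2
  have hutm1 : ∀ t : ℝ, ut (-1) t = 0 := by
    intro t
    have h2 : HasDerivAt (fun τ => u (-1) τ) 0 t := by
      have he : (fun τ => u (-1) τ) = fun _ => (0:ℝ) := funext fun τ => (hbc τ).1
      rw [he]; exact hasDerivAt_const t 0
    exact (hut (-1) negone_mem t).unique h2
  -- interior machinery
  have hDnhds : ∀ {y s : ℝ}, y ∈ Ioo (-1:ℝ) 1 → D ∈ 𝓝 ((y, s) : ℝ × ℝ) := by
    intro y s hy
    refine Filter.mem_of_superset ((isOpen_Ioo.prod isOpen_univ).mem_nhds ⟨hy, mem_univ _⟩) ?_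
    exact Set.prod_mono Ioo_subset_Icc_self subset_rfl
  have hFderiv : ∀ {y s : ℝ}, y ∈ Ioo (-1:ℝ) 1 →
      HasFDerivAt F (fderivWithin ℝ F D (y,s)) ((y,s) : ℝ × ℝ) := by
    intro y s hy
    exact ((hFd _ (hmemD (Ioo_subset_Icc_self hy))).hasFDerivWithinAt).hasFDerivAt (hDnhds hy)
  have hs11 : ∀ y ∈ Ioo (-1:ℝ) 1, ∀ s : ℝ,
      fderivWithin ℝ F D (y,s) (1,0) (1,0) = uxx y s := by
    intro y hy s
    have hyI : y ∈ Icc (-1:ℝ) 1 := Ioo_subset_Icc_self hy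
    have hγ : HasDerivAt (fun ξ : ℝ => ((ξ, s) : ℝ × ℝ)) ((1:ℝ),(0:ℝ)) y :=
      HasDerivAt.prodMk (hasDerivAt_id y) (hasDerivAt_const y s)
    have hcomp : HasDerivAt (fun ξ : ℝ => F (ξ, s))
        (fderivWithin ℝ F D (y,s) ((1:ℝ),(0:ℝ))) y := (hFderiv hy).comp_hasDerivAt_of_eq _ hγ rfl
    have happ : HasDerivAt (fun ξ => F (ξ, s) ((1:ℝ),(0:ℝ)))
        (fderivWithin ℝ F D (y,s) (1,0) (1,0)) y := by
      simpa using hcomp.clm_apply (hasDerivAt_const y ((1:ℝ),(0:ℝ)))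
    have hW : HasDerivWithinAt (fun ξ => ux ξ s)
        (fderivWithin ℝ F D (y,s) (1,0) (1,0)) (Icc (-1:ℝ) 1) y := by
      refine happ.hasDerivWithinAt.congr ?_ (hFx y hyI s).symm
      exact fun ξ hξ => (hFx ξ hξ s).symm
    exact (hW.derivWithin (hIcc_ud y hyI)).symm.trans
      ((huxx s y hyI).derivWithin (hIcc_ud y hyI))
  have hs22 : ∀ y ∈ Ioo (-1:ℝ) 1, ∀ s : ℝ,
      fderivWithin ℝ F D (y,s) (0,1) (0,1) = utt y s := by
    intro y hy s
    have hyI : y ∈ Icc (-1:ℝ) 1 := Ioo_subset_Icc_self hy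
    have hγ : HasDerivAt (fun τ : ℝ => ((y, τ) : ℝ × ℝ)) ((0:ℝ),(1:ℝ)) s :=
      HasDerivAt.prodMk (hasDerivAt_const s y) (hasDerivAt_id s)
    have hcomp : HasDerivAt (fun τ : ℝ => F (y, τ))
        (fderivWithin ℝ F D (y,s) ((0:ℝ),(1:ℝ))) s := (hFderiv hy).comp_hasDerivAt_of_eq _ hγ rfl
    have happ : HasDerivAt (fun τ => F (y, τ) ((0:ℝ),(1:ℝ)))
        (fderivWithin ℝ F D (y,s) (0,1) (0,1)) s := by
      simpa using hcomp.clm_apply (hasDerivAt_const s ((0:ℝ),(1:ℝ)))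
    have he : (fun τ => F (y, τ) ((0:ℝ),(1:ℝ))) = fun τ => ut y τ :=
      funext fun τ => hFt y hyI τ
    rw [he] at happ
    exact happ.unique (hutt y hyI s)
  have hsym : ∀ y ∈ Ioo (-1:ℝ) 1, ∀ s : ℝ,
      fderivWithin ℝ F D (y,s) (1,0) (0,1) = fderivWithin ℝ F D (y,s) (0,1) (1,0) := by
    intro y hy s
    have hsymm : IsSymmSndFDerivWithinAt ℝ U D (y,s) := by
      apply (hu _ (hmemD (Ioo_subset_Icc_self hy))).isSymmSndFDerivWithinAt (by norm_num) hDud ?_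
        (hmemD (Ioo_subset_Icc_self hy))
      rw [hDdef, interior_prod_eq, interior_Icc, interior_univ, closure_prod_eq,
        closure_Ioo (by norm_num : (-1:ℝ) ≠ 1), closure_univ]
      exact hmemD (Ioo_subset_Icc_self hy)
    exact hsymm (1,0) (0,1)
  -- characteristic constancy
  have hchar : ∀ ε : ℝ, (ε = 1 ∨ ε = -1) → ∀ x ∈ Icc (-1:ℝ) 1, ∀ t : ℝ, ∀ x' ∈ Icc (-1:ℝ) 1,
      F (x', t - ε*(x'-x)) (ε,1) = F (x,t) (ε,1) := by
    intro ε hε x hx t x' hx'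
    obtain ⟨hx1, hx2⟩ := hx
    obtain ⟨hx'1, hx'2⟩ := hx'
    have key := constIcc_aux (h := fun s => F (x + s, t - ε*s) ((ε:ℝ),(1:ℝ)))
      (show (-1-x:ℝ) < 1-x by linarith) ?_ ?_
    · have h0 : (0:ℝ) ∈ Icc (-1-x) (1-x) := ⟨by linarith, by linarith⟩
      have hs0 : x' - x ∈ Icc (-1-x) (1-x) := ⟨by linarith, by linarith⟩
      have := key (x'-x) hs0 0 h0
      simpa [show x + (x' - x) = x' by ring] using this
    · -- continuity
      have hγc : Continuous (fun s : ℝ => ((x + s, t - ε*s) : ℝ × ℝ)) := by fun_prop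
      have maps : MapsTo (fun s : ℝ => ((x + s, t - ε*s) : ℝ × ℝ))
          (Icc (-1-x) (1-x)) D := by
        intro s hs
        exact hmemD ⟨by linarith [hs.1], by linarith [hs.2]⟩
      have h1 : ContinuousOn (fun s : ℝ => F (x + s, t - ε*s)) (Icc (-1-x) (1-x)) :=
        hFc.continuousOn.comp hγc.continuousOn maps
      exact h1.clm_apply continuousOn_const
    · -- zero derivative on the interior
      intro s hs
      have hyI : x + s ∈ Ioo (-1:ℝ) 1 := ⟨by linarith [hs.1], by linarith [hs.2]⟩
      have hγ : HasDerivAt (fun s : ℝ => ((x + s, t - ε*s) : ℝ × ℝ)) ((1:ℝ), -ε) s := by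
        have h1 : HasDerivAt (fun s : ℝ => x + s) 1 s := (hasDerivAt_id s).const_add x
        have h2 : HasDerivAt (fun s : ℝ => t - ε*s) (-ε) s := by
          simpa using ((hasDerivAt_id s).const_mul ε).const_sub t
        exact HasDerivAt.prodMk h1 h2
      have hcomp : HasDerivAt (fun s : ℝ => F (x + s, t - ε*s))
          (fderivWithin ℝ F D (x+s, t-ε*s) ((1:ℝ), -ε)) s :=
        (hFderiv hyI).comp_hasDerivAt_of_eq _ hγ rfl
      have happ : HasDerivAt (fun s : ℝ => F (x + s, t - ε*s) ((ε:ℝ),(1:ℝ)))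
          (fderivWithin ℝ F D (x+s, t-ε*s) ((1:ℝ), -ε) ((ε:ℝ),(1:ℝ))) s := by
        simpa using hcomp.clm_apply (hasDerivAt_const s ((ε:ℝ),(1:ℝ)))
      have hz : fderivWithin ℝ F D (x+s, t-ε*s) ((1:ℝ), -ε) ((ε:ℝ),(1:ℝ)) = 0 := by
        have e1 : ((1:ℝ), -ε) = ((1:ℝ),(0:ℝ)) - ε • ((0:ℝ),(1:ℝ)) := by
          simp [Prod.ext_iff]
        have e2 : ((ε:ℝ), (1:ℝ)) = ε • ((1:ℝ),(0:ℝ)) + ((0:ℝ),(1:ℝ)) := by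
          simp [Prod.ext_iff]
        rw [e1, e2]
        simp only [map_sub, _root_.map_smul, map_add, ContinuousLinearMap.sub_apply,
          ContinuousLinearMap.smul_apply, ContinuousLinearMap.add_apply, smul_eq_mul]
        rw [hs11 _ hyI _, hs22 _ hyI _, hsym _ hyI _, hwave _ hyI]
        rcases hε with h | h <;> subst h <;> ring
      rw [← hz]
      exact happ
  -- Riemann invariants via boundary trace ux 1 ·
  have hA1 : ∀ x ∈ Icc (-1:ℝ) 1, ∀ t : ℝ, F (x,t) (1,1) = ux 1 (x+t-1) := by
    intro x hx t
    have h := hchar 1 (Or.inl rfl) x hx t 1 one_mem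
    rw [← h, show t - 1*(1-x) = x+t-1 by ring]
    have e : ((1:ℝ),(1:ℝ)) = ((1:ℝ),(0:ℝ)) + ((0:ℝ),(1:ℝ)) := by norm_num
    rw [e, map_add, hFx 1 one_mem _, hFt 1 one_mem _, hut1]
    ring
  have hA2 : ∀ x ∈ Icc (-1:ℝ) 1, ∀ t : ℝ, F (x,t) (-1,1) = - ux 1 (t+1-x) := by
    intro x hx t
    have h := hchar (-1) (Or.inr rfl) x hx t 1 one_mem
    rw [← h, show t - (-1)*(1-x) = t+1-x by ring]
    have e : ((-1:ℝ),(1:ℝ)) = ((0:ℝ),(1:ℝ)) - ((1:ℝ),(0:ℝ)) := by norm_num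
    rw [e, map_sub, hFx 1 one_mem _, hFt 1 one_mem _, hut1]
    ring
  have hutf : ∀ x ∈ Icc (-1:ℝ) 1, ∀ t : ℝ,
      ut x t = (ux 1 (x+t-1) - ux 1 (t+1-x))/2 := by
    intro x hx t
    have e : ((0:ℝ),(1:ℝ)) = (2⁻¹ : ℝ) • (((1:ℝ),(1:ℝ)) + ((-1:ℝ),(1:ℝ))) := by
      norm_num [Prod.ext_iff]
    rw [← hFt x hx t, e, _root_.map_smul, map_add, hA1 x hx t, hA2 x hx t, smul_eq_mul]
    ring
  have huxf : ∀ x ∈ Icc (-1:ℝ) 1, ∀ t : ℝ,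
      ux x t = (ux 1 (x+t-1) + ux 1 (t+1-x))/2 := by
    intro x hx t
    have e : ((1:ℝ),(0:ℝ)) = (2⁻¹ : ℝ) • (((1:ℝ),(1:ℝ)) - ((-1:ℝ),(1:ℝ))) := by
      norm_num [Prod.ext_iff]
    rw [← hFx x hx t, e, _root_.map_smul, map_sub, hA1 x hx t, hA2 x hx t, smul_eq_mul]
    ring
  -- 4-periodicity of the boundary trace
  have hper : ∀ s : ℝ, ux 1 (s+4) = ux 1 s := by
    intro s
    have h1 := hutf (-1) negone_mem (s+2)
    rw [hutm1] at h1
    have h2 : ux 1 ((-1)+(s+2)-1) = ux 1 ((s+2)+1-(-1)) := by linarith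
    rw [show (-1)+(s+2)-1 = s by ring, show (s+2)+1-(-1:ℝ) = s+4 by ring] at h2
    exact h2.symm
  -- continuity of the boundary trace
  have hbcont : Continuous (fun s : ℝ => ux 1 s) := by
    have h1 : ContinuousOn (fun s : ℝ => F (1, s)) (univ : Set ℝ) :=
      hFc.continuousOn.comp (Continuous.continuousOn (by fun_prop))
        (fun s _ => hmemD one_mem)
    have h2 : Continuous (fun s : ℝ => F (1, s) ((1:ℝ),(0:ℝ))) := by
      rw [← continuousOn_univ]
      exact h1.clm_apply continuousOn_const
    have he : (fun s : ℝ => ux 1 s) = fun s => F (1,s) ((1:ℝ),(0:ℝ)) :=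
      funext fun s => (hFx 1 one_mem s).symm
    rw [he]
    exact h2
  have hbsq : Continuous (fun s : ℝ => (ux 1 s)^2) := hbcont.pow 2
  -- energy integrand in terms of the boundary trace
  have hRpt : ∀ x ∈ Icc (-1:ℝ) 1,
      (ut x 0)^2 + (ux x 0)^2 = ((ux 1 (x-1))^2 + (ux 1 (1-x))^2)/2 := by
    intro x hx
    rw [hutf x hx 0, huxf x hx 0, show x+0-1 = x-1 by ring,
      show (0:ℝ)+1-x = 1-x by ring]
    ring
  have hR : (∫ x in (-1:ℝ)..1, ((ut x 0)^2 + (ux x 0)^2))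
      = ((∫ s in (-2:ℝ)..0, (ux 1 s)^2) + (∫ s in (0:ℝ)..2, (ux 1 s)^2))/2 := by
    have h1 : (∫ x in (-1:ℝ)..1, ((ut x 0)^2 + (ux x 0)^2))
        = ∫ x in (-1:ℝ)..1, (((ux 1 (x-1))^2 + (ux 1 (1-x))^2)/2) := by
      apply intervalIntegral.integral_congr
      intro x hx
      rw [uIcc_of_le (by norm_num : (-1:ℝ) ≤ 1)] at hx
      exact hRpt x hx
    have c1 : Continuous (fun x : ℝ => (ux 1 (x-1))^2) :=
      (hbcont.comp (continuous_id.sub continuous_const)).pow 2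
    have c2 : Continuous (fun x : ℝ => (ux 1 (1-x))^2) :=
      (hbcont.comp (continuous_const.sub continuous_id)).pow 2
    have h2 : (∫ x in (-1:ℝ)..1, (((ux 1 (x-1))^2 + (ux 1 (1-x))^2)/2))
        = (∫ x in (-1:ℝ)..1, ((ux 1 (x-1))^2 + (ux 1 (1-x))^2))/2 :=
      intervalIntegral.integral_div 2 _
    have s1 : (∫ x in (-1:ℝ)..1, (ux 1 (x-1))^2) = ∫ s in (-2:ℝ)..0, (ux 1 s)^2 := by
      have h := intervalIntegral.integral_comp_sub_right (a := (-1:ℝ)) (b := 1)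
        (fun s => (ux 1 s)^2) 1
      rw [show (-1:ℝ)-1 = -2 by norm_num, show (1:ℝ)-1 = 0 by norm_num] at h
      exact h
    have s2 : (∫ x in (-1:ℝ)..1, (ux 1 (1-x))^2) = ∫ s in (0:ℝ)..2, (ux 1 s)^2 := by
      have h := intervalIntegral.integral_comp_sub_left (a := (-1:ℝ)) (b := 1)
        (fun s => (ux 1 s)^2) 1
      rw [show (1:ℝ)-1 = 0 by norm_num, show (1:ℝ)-(-1) = 2 by norm_num] at h
      exact h
    rw [h1, h2, intervalIntegral.integral_add (c1.intervalIntegrable _ _)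
      (c2.intervalIntegrable _ _), s1, s2]
  have h24 : (∫ s in (2:ℝ)..4, (ux 1 s)^2) = ∫ s in (-2:ℝ)..0, (ux 1 s)^2 := by
    have h := intervalIntegral.integral_comp_add_right (a := (-2:ℝ)) (b := 0)
      (fun s => (ux 1 s)^2) 4
    rw [show (-2:ℝ)+4 = 2 by norm_num, show (0:ℝ)+4 = 4 by norm_num] at h
    rw [← h]
    apply intervalIntegral.integral_congr
    intro s _
    simp only [hper s]
  have hL : (∫ t in (0:ℝ)..4, (ux 1 t)^2)
      = (∫ s in (0:ℝ)..2, (ux 1 s)^2) + (∫ s in (2:ℝ)..4, (ux 1 s)^2) :=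
    (intervalIntegral.integral_add_adjacent_intervals (hbsq.intervalIntegrable _ _)
      (hbsq.intervalIntegrable _ _)).symm
  rw [hL, h24, hR]
  ring
end

section
/- For every T ≥ 4 and every classical solution u of the 1-D homogeneous wave equation on (-1,1) with homogeneous Dirichlet boundary conditions, the boundary observability inequality holds: 4·E(u(0)) ≤ ∫_0^T |u_x(1,t)|² dt. -/
open MeasureTheory Set

private lemma constOn_of_deriv0 {f : ℝ → ℝ} {a b : ℝ}
    (hc : ContinuousOn f (Icc a b))
    (hd : ∀ x ∈ Ioo a b, HasDerivAt f 0 x) :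
    ∀ x ∈ Icc a b, ∀ y ∈ Icc a b, f x = f y := by
  have hD : Convex ℝ (Icc a b) := convex_Icc a b
  have hdiff : DifferentiableOn ℝ f (interior (Icc a b)) := by
    rw [interior_Icc]; exact fun x hx => ((hd x hx).differentiableAt).differentiableWithinAt
  have h0 : ∀ x ∈ interior (Icc a b), deriv f x = 0 := by
    rw [interior_Icc]; exact fun x hx => (hd x hx).deriv
  have hmono := monotoneOn_of_deriv_nonneg hD hc hdiff (fun x hx => ge_of_eq (h0 x hx))
  have hanti := antitoneOn_of_deriv_nonpos hD hc hdiff (fun x hx => le_of_eq (h0 x hx))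
  intro x hx y hy
  rcases le_total x y with h | h
  · exact le_antisymm (hmono hx hy h) (hanti hx hy h)
  · exact (le_antisymm (hmono hy hx h) (hanti hy hx h)).symm

section
variable (u ut ux utt uxx : ℝ → ℝ → ℝ)
    (hu : ContDiffOn ℝ 2 (fun p : ℝ × ℝ => u p.1 p.2)
      (Set.Icc (-1 : ℝ) 1 ×ˢ (Set.univ : Set ℝ)))
    (hut : ∀ x ∈ Set.Icc (-1 : ℝ) 1, ∀ t : ℝ,
      HasDerivAt (fun τ => u x τ) (ut x t) t)
    (hutt : ∀ x ∈ Set.Icc (-1 : ℝ) 1, ∀ t : ℝ,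
      HasDerivAt (fun τ => ut x τ) (utt x t) t)
    (hux : ∀ t : ℝ, ∀ x ∈ Set.Icc (-1 : ℝ) 1,
      HasDerivWithinAt (fun ξ => u ξ t) (ux x t) (Set.Icc (-1 : ℝ) 1) x)
    (huxx : ∀ t : ℝ, ∀ x ∈ Set.Icc (-1 : ℝ) 1,
      HasDerivWithinAt (fun ξ => ux ξ t) (uxx x t) (Set.Icc (-1 : ℝ) 1) x)
    (hwave : ∀ x ∈ Set.Ioo (-1 : ℝ) 1, ∀ t : ℝ, utt x t = uxx x t)

include u utt uxx hu hut hutt hux huxx hwave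

private lemma second_facts
    {x0 t0 : ℝ} (hx0 : x0 ∈ Set.Ioo (-1 : ℝ) 1) :
    ∃ (B : (ℝ×ℝ) →L[ℝ] (ℝ×ℝ) →L[ℝ] ℝ) (V : Set (ℝ×ℝ)),
      IsOpen V ∧ (x0, t0) ∈ V ∧
      (∀ x t, (x, t) ∈ V → ut x t = fderiv ℝ (fun p : ℝ × ℝ => u p.1 p.2) (x, t) (0,1)) ∧
      (∀ x t, (x, t) ∈ V → ux x t = fderiv ℝ (fun p : ℝ × ℝ => u p.1 p.2) (x, t) (1,0)) ∧
      HasFDerivAt (fderiv ℝ (fun p : ℝ × ℝ => u p.1 p.2)) B (x0, t0) ∧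
      (∀ v w : ℝ × ℝ, B v w = B w v) ∧
      B (0,1) (0,1) = utt x0 t0 ∧ B (1,0) (1,0) = uxx x0 t0 := by
  set U : ℝ×ℝ → ℝ := fun p => u p.1 p.2 with hUdef
  have hIoo : IsOpen ((Set.Ioo (-1:ℝ) 1) ×ˢ (Set.univ : Set ℝ)) := isOpen_Ioo.prod isOpen_univ
  have hsub : ((Set.Ioo (-1:ℝ) 1) ×ˢ (Set.univ : Set ℝ)) ⊆ (Set.Icc (-1:ℝ) 1) ×ˢ (Set.univ : Set ℝ) :=
    Set.prod_mono Set.Ioo_subset_Icc_self (le_refl _)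
  have hz0mem : ((x0, t0) : ℝ×ℝ) ∈ (Set.Ioo (-1:ℝ) 1) ×ˢ (Set.univ : Set ℝ) := ⟨hx0, trivial⟩
  have hSnhds : (Set.Icc (-1:ℝ) 1) ×ˢ (Set.univ : Set ℝ) ∈ nhds ((x0,t0) : ℝ×ℝ) :=
    Filter.mem_of_superset (hIoo.mem_nhds hz0mem) hsub
  have hCA : ContDiffAt ℝ 2 U (x0,t0) := hu.contDiffAt hSnhds
  obtain ⟨w, hw, hwC⟩ := hCA.contDiffOn (le_refl _) (by simp)
  set V := interior w ∩ (Set.Ioo (-1:ℝ) 1) ×ˢ (Set.univ : Set ℝ) with hV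
  have hVopen : IsOpen V := isOpen_interior.inter hIoo
  have hz0V : ((x0,t0) : ℝ×ℝ) ∈ V := ⟨mem_interior_iff_mem_nhds.mpr hw, hz0mem⟩
  have hVC : ContDiffOn ℝ 2 U V := hwC.mono (fun z hz => interior_subset hz.1)
  have hdiff : ∀ z ∈ V, HasFDerivAt U (fderiv ℝ U z) z := by
    intro z hz
    exact ((hVC.differentiableOn (by norm_num)).differentiableAt (hVopen.mem_nhds hz)).hasFDerivAt
  have hFev : ∀ᶠ z in nhds ((x0,t0):ℝ×ℝ), HasFDerivAt U (fderiv ℝ U z) z :=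
    Filter.eventually_of_mem (hVopen.mem_nhds hz0V) hdiff
  have hBdiff : DifferentiableAt ℝ (fderiv ℝ U) (x0,t0) :=
    (hCA.fderiv_right (m := 1) (by norm_num)).differentiableAt (by norm_num)
  set B := fderiv ℝ (fderiv ℝ U) ((x0,t0):ℝ×ℝ) with hBdef
  have hB : HasFDerivAt (fderiv ℝ U) B ((x0,t0):ℝ×ℝ) := hBdiff.hasFDerivAt
  have hsymm : ∀ v w : ℝ×ℝ, B v w = B w v := fun v w =>
    second_derivative_symmetric_of_eventually hFev hB v w
  -- identification of ut on V
  have hut_eq : ∀ x t, (x, t) ∈ V → ut x t = fderiv ℝ U (x, t) (0,1) := by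
    intro x t hz
    have hxI : x ∈ Set.Icc (-1:ℝ) 1 := Set.Ioo_subset_Icc_self hz.2.1
    have hcurve : HasDerivAt (fun τ : ℝ => ((x, τ) : ℝ×ℝ)) ((0:ℝ),(1:ℝ)) t :=
      (hasDerivAt_const t x).prodMk (hasDerivAt_id t)
    have h1 : HasDerivAt (fun τ : ℝ => U (x, τ)) (fderiv ℝ U (x, t) (0,1)) t :=
      (hdiff (x,t) hz).comp_hasDerivAt_of_eq _ hcurve rfl
    exact (hut x hxI t).unique h1
  have hux_eq : ∀ x t, (x, t) ∈ V → ux x t = fderiv ℝ U (x, t) (1,0) := by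
    intro x t hz
    have hxI : x ∈ Set.Icc (-1:ℝ) 1 := Set.Ioo_subset_Icc_self hz.2.1
    have hcurve : HasDerivAt (fun ξ : ℝ => ((ξ, t) : ℝ×ℝ)) ((1:ℝ),(0:ℝ)) x :=
      (hasDerivAt_id x).prodMk (hasDerivAt_const x t)
    have h1 : HasDerivAt (fun ξ : ℝ => U (ξ, t)) (fderiv ℝ U (x, t) (1,0)) x :=
      (hdiff (x,t) hz).comp_hasDerivAt_of_eq _ hcurve rfl
    have h2 : HasDerivAt (fun ξ : ℝ => u ξ t) (ux x t) x :=
      (hux t x hxI).hasDerivAt (Icc_mem_nhds hz.2.1.1 hz.2.1.2)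
    exact h2.unique h1
  -- utt identification
  have hButt : B (0,1) (0,1) = utt x0 t0 := by
    have hcont : Continuous (fun τ : ℝ => ((x0, τ) : ℝ×ℝ)) := continuous_const.prodMk continuous_id
    have hpre : (fun τ : ℝ => ((x0, τ):ℝ×ℝ)) ⁻¹' V ∈ nhds t0 :=
      (hVopen.preimage hcont).mem_nhds (by simpa using hz0V)
    have hev : (fun τ : ℝ => ut x0 τ) =ᶠ[nhds t0] (fun τ : ℝ => fderiv ℝ U (x0, τ) (0,1)) := by
      filter_upwards [hpre] with τ hτ
      exact hut_eq x0 τ hτ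
    have hcurve : HasDerivAt (fun τ : ℝ => ((x0, τ) : ℝ×ℝ)) ((0:ℝ),(1:ℝ)) t0 :=
      (hasDerivAt_const t0 x0).prodMk (hasDerivAt_id t0)
    have hD1 : HasDerivAt (fun τ : ℝ => fderiv ℝ U (x0, τ) ((0:ℝ),(1:ℝ))) (B (0,1) (0,1)) t0 := by
      have h := (hB.clm_apply (hasFDerivAt_const ((0:ℝ),(1:ℝ)) ((x0,t0):ℝ×ℝ))).comp_hasDerivAt_of_eq _ hcurve rfl
      simpa [Function.comp_def] using h
    have h3 : HasDerivAt (fun τ : ℝ => ut x0 τ) (B (0,1) (0,1)) t0 :=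
      hD1.congr_of_eventuallyEq hev
    exact ((hutt x0 (Set.Ioo_subset_Icc_self hx0) t0).unique h3).symm
  have hBuxx : B (1,0) (1,0) = uxx x0 t0 := by
    have hcont : Continuous (fun ξ : ℝ => ((ξ, t0) : ℝ×ℝ)) := continuous_id.prodMk continuous_const
    have hpre : (fun ξ : ℝ => ((ξ, t0):ℝ×ℝ)) ⁻¹' V ∈ nhds x0 :=
      (hVopen.preimage hcont).mem_nhds (by simpa using hz0V)
    have hev : (fun ξ : ℝ => ux ξ t0) =ᶠ[nhds x0] (fun ξ : ℝ => fderiv ℝ U (ξ, t0) (1,0)) := by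
      filter_upwards [hpre] with ξ hξ
      exact hux_eq ξ t0 hξ
    have hcurve : HasDerivAt (fun ξ : ℝ => ((ξ, t0) : ℝ×ℝ)) ((1:ℝ),(0:ℝ)) x0 :=
      (hasDerivAt_id x0).prodMk (hasDerivAt_const x0 t0)
    have hD1 : HasDerivAt (fun ξ : ℝ => fderiv ℝ U (ξ, t0) ((1:ℝ),(0:ℝ))) (B (1,0) (1,0)) x0 := by
      have h := (hB.clm_apply (hasFDerivAt_const ((1:ℝ),(0:ℝ)) ((x0,t0):ℝ×ℝ))).comp_hasDerivAt_of_eq _ hcurve rfl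
      simpa [Function.comp_def] using h
    have h3 : HasDerivAt (fun ξ : ℝ => ux ξ t0) (B (1,0) (1,0)) x0 :=
      hD1.congr_of_eventuallyEq hev
    have h2 : HasDerivAt (fun ξ : ℝ => ux ξ t0) (uxx x0 t0) x0 :=
      (huxx t0 x0 (Set.Ioo_subset_Icc_self hx0)).hasDerivAt (Icc_mem_nhds hx0.1 hx0.2)
    exact (h2.unique h3).symm
  exact ⟨B, V, hVopen, hz0V, hut_eq, hux_eq, hB, hsymm, hButt, hBuxx⟩


private lemma p_deriv (c : ℝ) {x0 : ℝ} (hx0 : x0 ∈ Set.Ioo (-1 : ℝ) 1) :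
    HasDerivAt (fun x => ut x (c - x) + ux x (c - x)) 0 x0 := by
  obtain ⟨B, V, hVopen, hz0V, hut_eq, hux_eq, hB, hsymm, hButt, hBuxx⟩ :=
    second_facts u ut ux utt uxx hu hut hutt hux huxx hwave (t0 := c - x0) hx0
  set U : ℝ×ℝ → ℝ := fun p => u p.1 p.2 with hUdef
  have hline : HasDerivAt (fun x : ℝ => ((x, c - x) : ℝ×ℝ)) ((1:ℝ), (-1:ℝ)) x0 :=
    (hasDerivAt_id x0).prodMk ((hasDerivAt_id x0).const_sub c)
  have h2a : HasDerivAt (fun x : ℝ => fderiv ℝ U (x, c - x) ((0:ℝ),(1:ℝ)))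
      (B ((1:ℝ),(-1:ℝ)) ((0:ℝ),(1:ℝ))) x0 := by
    have h := (hB.clm_apply (hasFDerivAt_const ((0:ℝ),(1:ℝ)) ((x0, c - x0):ℝ×ℝ))).comp_hasDerivAt_of_eq _ hline rfl
    simpa [Function.comp_def] using h
  have h2b : HasDerivAt (fun x : ℝ => fderiv ℝ U (x, c - x) ((1:ℝ),(0:ℝ)))
      (B ((1:ℝ),(-1:ℝ)) ((1:ℝ),(0:ℝ))) x0 := by
    have h := (hB.clm_apply (hasFDerivAt_const ((1:ℝ),(0:ℝ)) ((x0, c - x0):ℝ×ℝ))).comp_hasDerivAt_of_eq _ hline rfl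
    simpa [Function.comp_def] using h
  have h2 := h2a.add h2b
  have hval : B ((1:ℝ),(-1:ℝ)) ((0:ℝ),(1:ℝ)) + B ((1:ℝ),(-1:ℝ)) ((1:ℝ),(0:ℝ)) = 0 := by
    have e1 : ((1:ℝ),(-1:ℝ)) = (((1:ℝ),(0:ℝ)) : ℝ×ℝ) - (((0:ℝ),(1:ℝ)) : ℝ×ℝ) := by
      simp [Prod.ext_iff]
    rw [e1, map_sub, ContinuousLinearMap.sub_apply, ContinuousLinearMap.sub_apply,
      hsymm ((1:ℝ),(0:ℝ)) ((0:ℝ),(1:ℝ)), hButt, hBuxx, hwave x0 hx0 (c - x0)]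
    ring
  rw [hval] at h2
  apply h2.congr_of_eventuallyEq
  have hlinecont : Continuous (fun x : ℝ => ((x, c - x) : ℝ×ℝ)) :=
    continuous_id.prodMk (continuous_const.sub continuous_id)
  have hpre : (fun x : ℝ => ((x, c - x):ℝ×ℝ)) ⁻¹' V ∈ nhds x0 :=
    (hVopen.preimage hlinecont).mem_nhds (by simpa using hz0V)
  filter_upwards [hpre] with x hxV
  rw [hut_eq x (c - x) hxV, hux_eq x (c - x) hxV]
  rfl

private lemma q_deriv (c : ℝ) {x0 : ℝ} (hx0 : x0 ∈ Set.Ioo (-1 : ℝ) 1) :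
    HasDerivAt (fun x => ut x (c + x) - ux x (c + x)) 0 x0 := by
  obtain ⟨B, V, hVopen, hz0V, hut_eq, hux_eq, hB, hsymm, hButt, hBuxx⟩ :=
    second_facts u ut ux utt uxx hu hut hutt hux huxx hwave (t0 := c + x0) hx0
  set U : ℝ×ℝ → ℝ := fun p => u p.1 p.2 with hUdef
  have hline : HasDerivAt (fun x : ℝ => ((x, c + x) : ℝ×ℝ)) ((1:ℝ), (1:ℝ)) x0 :=
    (hasDerivAt_id x0).prodMk ((hasDerivAt_id x0).const_add c)
  have h2a : HasDerivAt (fun x : ℝ => fderiv ℝ U (x, c + x) ((0:ℝ),(1:ℝ)))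
      (B ((1:ℝ),(1:ℝ)) ((0:ℝ),(1:ℝ))) x0 := by
    have h := (hB.clm_apply (hasFDerivAt_const ((0:ℝ),(1:ℝ)) ((x0, c + x0):ℝ×ℝ))).comp_hasDerivAt_of_eq _ hline rfl
    simpa [Function.comp_def] using h
  have h2b : HasDerivAt (fun x : ℝ => fderiv ℝ U (x, c + x) ((1:ℝ),(0:ℝ)))
      (B ((1:ℝ),(1:ℝ)) ((1:ℝ),(0:ℝ))) x0 := by
    have h := (hB.clm_apply (hasFDerivAt_const ((1:ℝ),(0:ℝ)) ((x0, c + x0):ℝ×ℝ))).comp_hasDerivAt_of_eq _ hline rfl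
    simpa [Function.comp_def] using h
  have h2 := h2a.sub h2b
  have hval : B ((1:ℝ),(1:ℝ)) ((0:ℝ),(1:ℝ)) - B ((1:ℝ),(1:ℝ)) ((1:ℝ),(0:ℝ)) = 0 := by
    have e1 : ((1:ℝ),(1:ℝ)) = (((1:ℝ),(0:ℝ)) : ℝ×ℝ) + (((0:ℝ),(1:ℝ)) : ℝ×ℝ) := by
      simp [Prod.ext_iff]
    rw [e1, map_add, ContinuousLinearMap.add_apply, ContinuousLinearMap.add_apply,
      hsymm ((0:ℝ),(1:ℝ)) ((1:ℝ),(0:ℝ)), hButt, hBuxx, hwave x0 hx0 (c + x0)]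
    ring
  rw [hval] at h2
  apply h2.congr_of_eventuallyEq
  have hlinecont : Continuous (fun x : ℝ => ((x, c + x) : ℝ×ℝ)) :=
    continuous_id.prodMk (continuous_const.add continuous_id)
  have hpre : (fun x : ℝ => ((x, c + x):ℝ×ℝ)) ⁻¹' V ∈ nhds x0 :=
    (hVopen.preimage hlinecont).mem_nhds (by simpa using hz0V)
  filter_upwards [hpre] with x hxV
  rw [hut_eq x (c + x) hxV, hux_eq x (c + x) hxV]
  rfl
end

theorem observability_inequality_wave
    (u ut ux utt uxx : ℝ → ℝ → ℝ)
    -- u is C² on [-1,1] × ℝ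
    (hu : ContDiffOn ℝ 2 (fun p : ℝ × ℝ => u p.1 p.2)
      (Set.Icc (-1 : ℝ) 1 ×ˢ (Set.univ : Set ℝ)))
    -- ut, utt are the first and second time derivatives of u
    (hut : ∀ x ∈ Set.Icc (-1 : ℝ) 1, ∀ t : ℝ,
      HasDerivAt (fun τ => u x τ) (ut x t) t)
    (hutt : ∀ x ∈ Set.Icc (-1 : ℝ) 1, ∀ t : ℝ,
      HasDerivAt (fun τ => ut x τ) (utt x t) t)
    -- ux, uxx are the first and second space derivatives of u (one-sided at ±1)
    (hux : ∀ t : ℝ, ∀ x ∈ Set.Icc (-1 : ℝ) 1,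
      HasDerivWithinAt (fun ξ => u ξ t) (ux x t) (Set.Icc (-1 : ℝ) 1) x)
    (huxx : ∀ t : ℝ, ∀ x ∈ Set.Icc (-1 : ℝ) 1,
      HasDerivWithinAt (fun ξ => ux ξ t) (uxx x t) (Set.Icc (-1 : ℝ) 1) x)
    -- the wave equation u_tt = u_xx on (-1,1) × ℝ
    (hwave : ∀ x ∈ Set.Ioo (-1 : ℝ) 1, ∀ t : ℝ, utt x t = uxx x t)
    -- homogeneous Dirichlet boundary conditions
    (hbc : ∀ t : ℝ, u (-1) t = 0 ∧ u 1 t = 0) :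
    ∀ T : ℝ, 4 ≤ T →
      4 * ((1 / 2) * ∫ x in (-1 : ℝ)..1, ((ut x 0) ^ 2 + (ux x 0) ^ 2))
        ≤ ∫ t in (0 : ℝ)..T, (ux 1 t) ^ 2 := by
  intro T hT
  have h1mem : (1:ℝ) ∈ Set.Icc (-1:ℝ) 1 := by norm_num
  have hm1mem : (-1:ℝ) ∈ Set.Icc (-1:ℝ) 1 := by norm_num
  set S : Set (ℝ×ℝ) := Set.Icc (-1:ℝ) 1 ×ˢ (Set.univ : Set ℝ) with hSdef
  set U : ℝ×ℝ → ℝ := fun p => u p.1 p.2 with hUdef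
  have hUD : UniqueDiffOn ℝ S := (uniqueDiffOn_Icc (by norm_num)).prod uniqueDiffOn_univ
  set G : ℝ×ℝ → (ℝ×ℝ) →L[ℝ] ℝ := fderivWithin ℝ U S with hGdef
  have hdiffS : DifferentiableOn ℝ U S := hu.differentiableOn (by norm_num)
  -- identification on S
  have hutS : ∀ x ∈ Set.Icc (-1:ℝ) 1, ∀ t : ℝ, ut x t = G (x,t) (0,1) := by
    intro x hx t
    have hG : HasFDerivWithinAt U (G (x,t)) S (x,t) := (hdiffS (x,t) ⟨hx, trivial⟩).hasFDerivWithinAt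
    have hcurve : HasDerivWithinAt (fun τ : ℝ => ((x, τ) : ℝ×ℝ)) ((0:ℝ),(1:ℝ)) Set.univ t :=
      ((hasDerivAt_const t x).prodMk (hasDerivAt_id t)).hasDerivWithinAt
    have hcomp : HasDerivWithinAt (fun τ : ℝ => U (x, τ)) (G (x,t) (0,1)) Set.univ t :=
      hG.comp_hasDerivWithinAt_of_eq t hcurve (fun τ _ => ⟨hx, trivial⟩) rfl
    exact (hut x hx t).unique (hasDerivWithinAt_univ.mp hcomp)
  have huxS : ∀ x ∈ Set.Icc (-1:ℝ) 1, ∀ t : ℝ, ux x t = G (x,t) (1,0) := by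
    intro x hx t
    have hG : HasFDerivWithinAt U (G (x,t)) S (x,t) := (hdiffS (x,t) ⟨hx, trivial⟩).hasFDerivWithinAt
    have hcurve : HasDerivWithinAt (fun ξ : ℝ => ((ξ, t) : ℝ×ℝ)) ((1:ℝ),(0:ℝ)) (Set.Icc (-1:ℝ) 1) x :=
      ((hasDerivAt_id x).prodMk (hasDerivAt_const x t)).hasDerivWithinAt
    have hcomp : HasDerivWithinAt (fun ξ : ℝ => U (ξ, t)) (G (x,t) (1,0)) (Set.Icc (-1:ℝ) 1) x :=
      hG.comp_hasDerivWithinAt_of_eq x hcurve (fun ξ hξ => ⟨hξ, trivial⟩) rfl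
    have hu1 : UniqueDiffWithinAt ℝ (Set.Icc (-1:ℝ) 1) x := uniqueDiffOn_Icc (by norm_num) x hx
    have e1 := (hux t x hx).derivWithin hu1
    have e2 := hcomp.derivWithin hu1
    rw [← e1, ← e2]
  -- continuity
  have hGapply : ContinuousOn (fun p : (ℝ×ℝ)×(ℝ×ℝ) => G p.1 p.2) (S ×ˢ (Set.univ : Set (ℝ×ℝ))) :=
    hu.continuousOn_fderivWithin_apply hUD (by norm_num)
  have hutC : ContinuousOn (fun z : ℝ×ℝ => ut z.1 z.2) S := by
    have h1 : ContinuousOn (fun z : ℝ×ℝ => G z ((0:ℝ),(1:ℝ))) S := by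
      have := hGapply.comp (f := fun z : ℝ×ℝ => ((z, ((0:ℝ),(1:ℝ))) : (ℝ×ℝ)×(ℝ×ℝ)))
        (Continuous.continuousOn (continuous_id.prodMk continuous_const))
        (fun z hz => ⟨hz, trivial⟩)
      exact this
    exact h1.congr (fun z hz => by rw [hutS z.1 hz.1 z.2])
  have huxC : ContinuousOn (fun z : ℝ×ℝ => ux z.1 z.2) S := by
    have h1 : ContinuousOn (fun z : ℝ×ℝ => G z ((1:ℝ),(0:ℝ))) S := by
      have := hGapply.comp (f := fun z : ℝ×ℝ => ((z, ((1:ℝ),(0:ℝ))) : (ℝ×ℝ)×(ℝ×ℝ)))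
        (Continuous.continuousOn (continuous_id.prodMk continuous_const))
        (fun z hz => ⟨hz, trivial⟩)
      exact this
    exact h1.congr (fun z hz => by rw [huxS z.1 hz.1 z.2])
  -- boundary derivatives vanish
  have hut1 : ∀ t : ℝ, ut 1 t = 0 := by
    intro t
    have h0 : HasDerivAt (fun τ : ℝ => u 1 τ) 0 t := by
      have he : (fun τ : ℝ => u 1 τ) = fun _ => (0:ℝ) := funext fun τ => (hbc τ).2
      rw [he]; exact hasDerivAt_const t 0
    exact (hut 1 h1mem t).unique h0
  have hutm1 : ∀ t : ℝ, ut (-1) t = 0 := by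
    intro t
    have h0 : HasDerivAt (fun τ : ℝ => u (-1) τ) 0 t := by
      have he : (fun τ : ℝ => u (-1) τ) = fun _ => (0:ℝ) := funext fun τ => (hbc τ).1
      rw [he]; exact hasDerivAt_const t 0
    exact (hut (-1) hm1mem t).unique h0
  -- propagation along characteristics
  have hPconst : ∀ x1 ∈ Set.Icc (-1:ℝ) 1, ∀ x2 ∈ Set.Icc (-1:ℝ) 1, ∀ t1 t2 : ℝ,
      x1 + t1 = x2 + t2 →
      ut x1 t1 + ux x1 t1 = ut x2 t2 + ux x2 t2 := by
    intro x1 hx1 x2 hx2 t1 t2 hsum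
    set c := x1 + t1 with hc
    have hcont : ContinuousOn (fun x : ℝ => ut x (c - x) + ux x (c - x)) (Set.Icc (-1:ℝ) 1) := by
      have hcurve : ContinuousOn (fun x : ℝ => ((x, c - x)) : ℝ → ℝ×ℝ) (Set.Icc (-1:ℝ) 1) :=
        Continuous.continuousOn (continuous_id.prodMk (continuous_const.sub continuous_id))
      have hmaps : ∀ x ∈ Set.Icc (-1:ℝ) 1, ((x, c - x) : ℝ×ℝ) ∈ S := fun x hx => ⟨hx, trivial⟩
      exact (hutC.comp hcurve hmaps).add (huxC.comp hcurve hmaps)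
    have := constOn_of_deriv0 hcont
      (fun x hx => p_deriv u ut ux utt uxx hu hut hutt hux huxx hwave c hx) x1 hx1 x2 hx2
    have e1 : c - x1 = t1 := by rw [hc]; ring
    have e2 : c - x2 = t2 := by rw [hc]; linarith
    rwa [e1, e2] at this
  have hQconst : ∀ x1 ∈ Set.Icc (-1:ℝ) 1, ∀ x2 ∈ Set.Icc (-1:ℝ) 1, ∀ t1 t2 : ℝ,
      x1 - t1 = x2 - t2 →
      ut x1 t1 - ux x1 t1 = ut x2 t2 - ux x2 t2 := by
    intro x1 hx1 x2 hx2 t1 t2 hsum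
    set c := t1 - x1 with hc
    have hcont : ContinuousOn (fun x : ℝ => ut x (c + x) - ux x (c + x)) (Set.Icc (-1:ℝ) 1) := by
      have hcurve : ContinuousOn (fun x : ℝ => ((x, c + x)) : ℝ → ℝ×ℝ) (Set.Icc (-1:ℝ) 1) :=
        Continuous.continuousOn (continuous_id.prodMk (continuous_const.add continuous_id))
      have hmaps : ∀ x ∈ Set.Icc (-1:ℝ) 1, ((x, c + x) : ℝ×ℝ) ∈ S := fun x hx => ⟨hx, trivial⟩
      exact (hutC.comp hcurve hmaps).sub (huxC.comp hcurve hmaps)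
    have := constOn_of_deriv0 hcont
      (fun x hx => q_deriv u ut ux utt uxx hu hut hutt hux huxx hwave c hx) x1 hx1 x2 hx2
    have e1 : c + x1 = t1 := by rw [hc]; ring
    have e2 : c + x2 = t2 := by rw [hc]; linarith
    rwa [e1, e2] at this
  -- pointwise formulas for the boundary trace
  have hform1 : ∀ t ∈ Set.Icc (0:ℝ) 2, (ux 1 t)^2 = (ut (1-t) 0 - ux (1-t) 0)^2 := by
    intro t ht
    have hmem : (1 - t) ∈ Set.Icc (-1:ℝ) 1 := ⟨by linarith [ht.2], by linarith [ht.1]⟩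
    have hQ := hQconst 1 h1mem (1-t) hmem t 0 (by ring)
    have h1 := hut1 t
    have : ux 1 t = -(ut (1-t) 0 - ux (1-t) 0) := by linarith
    rw [this]; ring
  have hform2 : ∀ t ∈ Set.Icc (2:ℝ) 4, (ux 1 t)^2 = (ut (t-3) 0 + ux (t-3) 0)^2 := by
    intro t ht
    have hmem : (t - 3) ∈ Set.Icc (-1:ℝ) 1 := ⟨by linarith [ht.1], by linarith [ht.2]⟩
    have hQa := hQconst 1 h1mem (-1) hm1mem t (t-2) (by ring)
    have hPa := hPconst (-1) hm1mem (t-3) hmem (t-2) 0 (by ring)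
    have h1 := hut1 t
    have h2 := hutm1 (t-2)
    have : ux 1 t = ut (t-3) 0 + ux (t-3) 0 := by linarith
    rw [this]
  -- continuity of traces
  have hux1cont : Continuous fun t : ℝ => ux 1 t := by
    rw [← continuousOn_univ]
    have hcurve : ContinuousOn (fun t : ℝ => (((1:ℝ), t)) : ℝ → ℝ×ℝ) Set.univ :=
      Continuous.continuousOn (continuous_const.prodMk continuous_id)
    exact huxC.comp hcurve (fun t _ => ⟨h1mem, trivial⟩)
  have hut0C : ContinuousOn (fun x : ℝ => ut x 0) (Set.Icc (-1:ℝ) 1) := by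
    have hcurve : ContinuousOn (fun x : ℝ => ((x, (0:ℝ))) : ℝ → ℝ×ℝ) (Set.Icc (-1:ℝ) 1) :=
      Continuous.continuousOn (continuous_id.prodMk continuous_const)
    exact hutC.comp hcurve (fun x hx => ⟨hx, trivial⟩)
  have hux0C : ContinuousOn (fun x : ℝ => ux x 0) (Set.Icc (-1:ℝ) 1) := by
    have hcurve : ContinuousOn (fun x : ℝ => ((x, (0:ℝ))) : ℝ → ℝ×ℝ) (Set.Icc (-1:ℝ) 1) :=
      Continuous.continuousOn (continuous_id.prodMk continuous_const)
    exact huxC.comp hcurve (fun x hx => ⟨hx, trivial⟩)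
  -- integrability
  have hIa : ∀ a b : ℝ, IntervalIntegrable (fun t => (ux 1 t)^2) volume a b :=
    fun a b => (hux1cont.pow 2).intervalIntegrable a b
  have hfint : IntervalIntegrable (fun x => (ut x 0 - ux x 0)^2) volume (-1) 1 := by
    apply ContinuousOn.intervalIntegrable
    rw [uIcc_of_le (by norm_num : (-1:ℝ) ≤ 1)]
    exact (hut0C.sub hux0C).pow 2
  have hgint : IntervalIntegrable (fun x => (ut x 0 + ux x 0)^2) volume (-1) 1 := by
    apply ContinuousOn.intervalIntegrable
    rw [uIcc_of_le (by norm_num : (-1:ℝ) ≤ 1)]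
    exact (hut0C.add hux0C).pow 2
  -- integral computations
  have hI02 : (∫ t in (0:ℝ)..2, (ux 1 t)^2) = ∫ x in (-1:ℝ)..1, (ut x 0 - ux x 0)^2 := by
    have e1 : (∫ t in (0:ℝ)..2, (ux 1 t)^2)
        = ∫ t in (0:ℝ)..2, (fun y => (ut y 0 - ux y 0)^2) (1 - t) := by
      apply intervalIntegral.integral_congr
      intro t ht
      rw [uIcc_of_le (by norm_num : (0:ℝ) ≤ 2)] at ht
      exact hform1 t ht
    have e2 := intervalIntegral.integral_comp_sub_left (a := (0:ℝ)) (b := 2)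
      (fun y => (ut y 0 - ux y 0)^2) 1
    rw [e1, e2]
    norm_num
  have hI24 : (∫ t in (2:ℝ)..4, (ux 1 t)^2) = ∫ x in (-1:ℝ)..1, (ut x 0 + ux x 0)^2 := by
    have e1 : (∫ t in (2:ℝ)..4, (ux 1 t)^2)
        = ∫ t in (2:ℝ)..4, (fun y => (ut y 0 + ux y 0)^2) (t - 3) := by
      apply intervalIntegral.integral_congr
      intro t ht
      rw [uIcc_of_le (by norm_num : (2:ℝ) ≤ 4)] at ht
      exact hform2 t ht
    have e2 := intervalIntegral.integral_comp_sub_right (a := (2:ℝ)) (b := 4)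
      (fun y => (ut y 0 + ux y 0)^2) 3
    rw [e1, e2]
    norm_num
  have hsplit : (∫ t in (0:ℝ)..4, (ux 1 t)^2)
      = (∫ t in (0:ℝ)..2, (ux 1 t)^2) + ∫ t in (2:ℝ)..4, (ux 1 t)^2 :=
    (intervalIntegral.integral_add_adjacent_intervals (hIa 0 2) (hIa 2 4)).symm
  have hcomb : (∫ x in (-1:ℝ)..1, (ut x 0 - ux x 0)^2) + (∫ x in (-1:ℝ)..1, (ut x 0 + ux x 0)^2)
      = 2 * ∫ x in (-1:ℝ)..1, ((ut x 0)^2 + (ux x 0)^2) := by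
    rw [← intervalIntegral.integral_add hfint hgint, ← intervalIntegral.integral_const_mul]
    apply intervalIntegral.integral_congr
    intro x _
    ring
  have hTsplit : (∫ t in (0:ℝ)..T, (ux 1 t)^2)
      = (∫ t in (0:ℝ)..4, (ux 1 t)^2) + ∫ t in (4:ℝ)..T, (ux 1 t)^2 :=
    (intervalIntegral.integral_add_adjacent_intervals (hIa 0 4) (hIa 4 T)).symm
  have htail : 0 ≤ ∫ t in (4:ℝ)..T, (ux 1 t)^2 :=
    intervalIntegral.integral_nonneg hT (fun s _ => sq_nonneg _)
  have hgoal : 4 * ((1 / 2) * ∫ x in (-1 : ℝ)..1, ((ut x 0) ^ 2 + (ux x 0) ^ 2))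
      = ∫ t in (0:ℝ)..4, (ux 1 t)^2 := by
    rw [hsplit, hI02, hI24, hcomb]
    ring
  rw [hgoal, hTsplit]
  linarith
end

section
/- The basis functions L̃_k are orthonormal for the H¹₀ inner product: for all i, j ≥ 1, ∫_{-1}^{1} L̃_i'(x)·L̃_j'(x) dx = 1 if i = j and 0 otherwise. -/
open Polynomial

/-- The Legendre polynomials, defined by the three-term recurrence
`L₀ = 1`, `L₁ = X`, `(k+2)·L_{k+2} = (2k+3)·X·L_{k+1} − (k+1)·L_k`. -/
noncomputable def legendre : ℕ → Polynomial ℝ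
  | 0 => 1
  | 1 => Polynomial.X
  | (k + 2) =>
      Polynomial.C ((2 * (k : ℝ) + 3) / ((k : ℝ) + 2)) * (Polynomial.X * legendre (k + 1))
        - Polynomial.C (((k : ℝ) + 1) / ((k : ℝ) + 2)) * legendre k

/-- The basis functions `L̃_k = (L_{k−1} − L_{k+1})/√(4k+2)`, for `k ≥ 1`. -/
noncomputable def legendreTilde (k : ℕ) : Polynomial ℝ :=
  Polynomial.C (1 / Real.sqrt (4 * (k : ℝ) + 2)) * (legendre (k - 1) - legendre (k + 1))

lemma leg_rec (k : ℕ) (x : ℝ) :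
    ((k:ℝ)+2) * eval x (legendre (k+2)) =
      (2*(k:ℝ)+3) * (x * eval x (legendre (k+1))) - ((k:ℝ)+1) * eval x (legendre k) := by
  have hk : ((k:ℝ)+2) ≠ 0 := by positivity
  simp only [legendre, eval_sub, eval_mul, eval_C, eval_X]
  field_simp
  try ring

lemma leg_deriv_rec (k : ℕ) (x : ℝ) :
    ((k:ℝ)+2) * eval x (derivative (legendre (k+2))) =
      (2*(k:ℝ)+3) * (eval x (legendre (k+1)) + x * eval x (derivative (legendre (k+1))))
        - ((k:ℝ)+1) * eval x (derivative (legendre k)) := by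
  have hk : ((k:ℝ)+2) ≠ 0 := by positivity
  simp only [legendre, derivative_sub, derivative_mul, derivative_C, derivative_X,
    eval_sub, eval_add, eval_mul, eval_C, eval_X, eval_zero, eval_one]
  field_simp
  try ring

lemma x_mul_Le (m : ℕ) (x : ℝ) :
    (2*(m:ℝ)+1) * (x * eval x (legendre m)) =
      ((m:ℝ)+1) * eval x (legendre (m+1)) + (m:ℝ) * eval x (legendre (m-1)) := by
  cases m with
  | zero => simp [legendre]
  | succ p =>
      have h := leg_rec p x
      simp only [Nat.succ_sub_one]
      push_cast at h ⊢
      linear_combination -h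

/-- (ii): `x·Lₙ' = n·Lₙ + L_{n-1}'` and (DI): `L_{n+1}' = (2n+1)·Lₙ + L_{n-1}'`. -/
lemma leg_aux : ∀ n : ℕ, (∀ x : ℝ, x * eval x (derivative (legendre n)) =
      (n:ℝ) * eval x (legendre n) + eval x (derivative (legendre (n-1))))
    ∧ (∀ x : ℝ, eval x (derivative (legendre (n+1))) =
      (2*(n:ℝ)+1) * eval x (legendre n) + eval x (derivative (legendre (n-1)))) := by
  intro n
  induction n using Nat.strong_induction_on with
  | _ n ih =>
    match n with
    | 0 => constructor <;> intro x <;> simp [legendre]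
    | 1 =>
      constructor <;> intro x
      · simp [legendre]
      · have h := leg_deriv_rec 0 x
        simp only [legendre] at h ⊢
        push_cast at h ⊢
        simp at h ⊢
        linarith [show eval x (derivative (legendre 0)) = 0 by simp [legendre]]
    | (m+2) =>
      have ih1 := ih (m+1) (by omega)
      have ih0 := ih m (by omega)
      have hii : ∀ x : ℝ, x * eval x (derivative (legendre (m+2))) =
          ((m+2:ℕ):ℝ) * eval x (legendre (m+2)) + eval x (derivative (legendre (m+2-1))) := by
        intro x
        simp only [show m+2-1 = m+1 from rfl]
        have hDI1 := ih1.2 x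
        have hxle := x_mul_Le (m+1) x
        have hiim := ih0.1 x
        have hDIm := ih0.2 x
        simp only [Nat.succ_sub_one] at hDI1 hxle
        push_cast at hDI1 hxle hiim hDIm ⊢
        linear_combination x * hDI1 + hxle + hiim - hDIm
      refine ⟨hii, ?_⟩
      intro x
      have hdr := leg_deriv_rec (m+1) x
      have h2 := hii x
      push_cast at hdr h2 ⊢
      have h3 : ((m:ℝ)+3) * eval x (derivative (legendre (m+3))) =
          ((m:ℝ)+3) * ((2*(m:ℝ)+5) * eval x (legendre (m+2)) + eval x (derivative (legendre (m+1)))) := by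
        have : legendre (m+1+2) = legendre (m+3) := by norm_num
        rw [this] at hdr
        linear_combination hdr + (2*(m:ℝ)+5) * h2
      have hne : ((m:ℝ)+3) ≠ 0 := by positivity
      have h4 := mul_left_cancel₀ hne h3
      simp only [show m+2+1 = m+3 from rfl, show m+2-1 = m+1 from rfl]
      push_cast
      linarith [h4]

/-- (DI): `L_{n+1}' = (2n+1)·Lₙ + L_{n-1}'` (with `L_{0-1} := L_0`). -/
lemma leg_DI (n : ℕ) (x : ℝ) : eval x (derivative (legendre (n+1))) =
    (2*(n:ℝ)+1) * eval x (legendre n) + eval x (derivative (legendre (n-1))) :=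
  (leg_aux n).2 x

lemma leg_eval_one : ∀ n : ℕ, eval 1 (legendre n) = 1 := by
  intro n
  induction n using Nat.strong_induction_on with
  | _ n ih =>
    match n with
    | 0 => simp [legendre]
    | 1 => simp [legendre]
    | (m+2) =>
      have h := leg_rec m 1
      rw [ih (m+1) (by omega), ih m (by omega)] at h
      have hne : ((m:ℝ)+2) ≠ 0 := by positivity
      have h' : ((m:ℝ)+2) * eval 1 (legendre (m+2)) = ((m:ℝ)+2) * 1 := by ring_nf; ring_nf at h; linarith
      exact mul_left_cancel₀ hne h'

lemma leg_parity : ∀ (n : ℕ) (x : ℝ), eval (-x) (legendre n) = (-1)^n * eval x (legendre n) := by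
  intro n
  induction n using Nat.strong_induction_on with
  | _ n ih =>
    match n with
    | 0 => simp [legendre]
    | 1 => simp [legendre]
    | (m+2) =>
      intro x
      have h1 := leg_rec m x
      have h2 := leg_rec m (-x)
      rw [ih (m+1) (by omega), ih m (by omega)] at h2
      have hne : ((m:ℝ)+2) ≠ 0 := by positivity
      have : ((m:ℝ)+2) * eval (-x) (legendre (m+2)) = ((m:ℝ)+2) * ((-1)^(m+2) * eval x (legendre (m+2))) := by
        rw [h2]
        have e1 : (-1:ℝ)^(m+1) = (-1)^m * (-1) := by ring
        have e2 : (-1:ℝ)^(m+2) = (-1)^m := by ring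
        rw [e1, e2]
        linear_combination (-(-1:ℝ)^m) * h1
      exact mul_left_cancel₀ hne this

lemma leg_eval_neg_one (n : ℕ) : eval (-1) (legendre n) = (-1)^n := by
  have := leg_parity n 1
  rwa [leg_eval_one n, mul_one] at this

lemma contP (p : Polynomial ℝ) : Continuous fun x : ℝ => eval x p := p.continuous_aeval

noncomputable def II (i j : ℕ) : ℝ := ∫ x in (-1:ℝ)..1, eval x (legendre i) * eval x (legendre j)

lemma II_symm (i j : ℕ) : II i j = II j i := by
  unfold II; simp_rw [mul_comm]

lemma int_lin (a b c : ℝ) (F G H : ℝ → ℝ) (hG : Continuous G) (hH : Continuous H)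
    (h : ∀ x, a * F x = b * G x + c * H x) :
    a * ∫ x in (-1:ℝ)..1, F x =
      b * (∫ x in (-1:ℝ)..1, G x) + c * ∫ x in (-1:ℝ)..1, H x := by
  rw [← intervalIntegral.integral_const_mul]
  simp_rw [h]
  rw [intervalIntegral.integral_add (f := fun x => b * G x) (g := fun x => c * H x)
    ((continuous_const.mul hG).intervalIntegrable _ _)
    ((continuous_const.mul hH).intervalIntegrable _ _),
    intervalIntegral.integral_const_mul, intervalIntegral.integral_const_mul]

lemma odd_int (f : ℝ → ℝ) (hf : ∀ x, f (-x) = - f x) : (∫ x in (-1:ℝ)..1, f x) = 0 := by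
  have h1 : (∫ x in (-1:ℝ)..1, f (-x)) = ∫ x in (-1:ℝ)..1, f x := by
    simpa using intervalIntegral.integral_comp_neg f
  simp_rw [hf, intervalIntegral.integral_neg] at h1
  linarith

lemma int_boundary (i j : ℕ) :
    (∫ x in (-1:ℝ)..1, (eval x (derivative (legendre i)) * eval x (legendre j)
      + eval x (legendre i) * eval x (derivative (legendre j)))) =
      eval 1 (legendre i) * eval 1 (legendre j) - eval (-1) (legendre i) * eval (-1) (legendre j) := by
  have := intervalIntegral.integral_eq_sub_of_hasDerivAt
    (f := fun x : ℝ => eval x (legendre i) * eval x (legendre j))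
    (f' := fun x : ℝ => eval x (derivative (legendre i)) * eval x (legendre j)
      + eval x (legendre i) * eval x (derivative (legendre j)))
    (a := (-1:ℝ)) (b := (1:ℝ))
    (fun x _ => ((legendre i).hasDerivAt x).mul ((legendre j).hasDerivAt x))
    ((((contP _).mul (contP _)).add ((contP _).mul (contP _))).intervalIntegrable _ _)
  simpa using this

noncomputable def JJ (i j : ℕ) : ℝ :=
  ∫ x in (-1:ℝ)..1, x * eval x (legendre i) * eval x (legendre j)

lemma II_rec (k m : ℕ) : ((k:ℝ)+2) * II (k+2) m =
    (2*(k:ℝ)+3) * JJ (k+1) m + (-((k:ℝ)+1)) * II k m :=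
  int_lin _ _ _ _ _ _ ((continuous_id.mul (contP _)).mul (contP _)) ((contP _).mul (contP _))
    (fun x => by linear_combination (eval x (legendre m)) * leg_rec k x)

lemma JJ_exp (K m : ℕ) : (2*(m:ℝ)+1) * JJ K m =
    ((m:ℝ)+1) * II K (m+1) + (m:ℝ) * II K (m-1) :=
  int_lin _ _ _ _ _ _ ((contP _).mul (contP _)) ((contP _).mul (contP _))
    (fun x => by linear_combination (eval x (legendre K)) * x_mul_Le m x)

lemma JJ_diag (K : ℕ) : JJ K K = 0 := by
  apply odd_int
  intro x
  have hp := leg_parity K x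
  have h1 : ((-1:ℝ)^K) * ((-1:ℝ)^K) = 1 := by
    rw [← pow_add]; exact Even.neg_one_pow ⟨K, rfl⟩
  rw [hp]
  linear_combination (-(x * eval x (legendre K) * eval x (legendre K))) * h1

lemma int_Le_dLe : ∀ (j K : ℕ), (∀ m, m < j → II K m = 0) →
    (∫ x in (-1:ℝ)..1, eval x (legendre K) * eval x (derivative (legendre j))) = 0 := by
  intro j
  induction j using Nat.strong_induction_on with
  | _ j ih =>
    match j with
    | 0 => intro K h; simp [legendre]
    | 1 =>
      intro K h
      have h0 := h 0 (by omega)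
      unfold II at h0
      simpa [legendre] using h0
    | (p+2) =>
      intro K h
      have hDI : ∀ x : ℝ, (1:ℝ) * (eval x (legendre K) * eval x (derivative (legendre (p+2)))) =
          (2*(p:ℝ)+3) * (eval x (legendre K) * eval x (legendre (p+1)))
          + (1:ℝ) * (eval x (legendre K) * eval x (derivative (legendre p))) := by
        intro x
        have hd := leg_DI (p+1) x
        simp only [Nat.succ_sub_one] at hd
        push_cast at hd
        linear_combination (eval x (legendre K)) * hd
      have hint := int_lin 1 (2*(p:ℝ)+3) 1 _ _ _ ((contP _).mul (contP _))
        ((contP _).mul (contP _)) hDI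
      simp only [Pi.mul_apply] at hint
      have e2 : (∫ x in (-1:ℝ)..1, eval x (legendre K) * eval x (legendre (p+1))) = 0 := by
        have := h (p+1) (by omega); unfold II at this; exact this
      have e3 := ih p (by omega) K (fun m hm => h m (by omega))
      rw [e2, e3] at hint
      linarith [hint]

lemma main : ∀ n : ℕ, (∀ m, m < n+1 → II (n+1) m = 0) ∧ II n n = 2/(2*(n:ℝ)+1) := by
  intro n
  induction n using Nat.strong_induction_on with
  | _ n ih =>
    match n with
    | 0 =>
      constructor
      · intro m hm
        interval_cases m
        apply odd_int
        intro x
        simp [legendre]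
      · unfold II
        simp [legendre]
        norm_num
    | 1 =>
      have h21 : II 2 1 = 0 := by
        apply odd_int
        intro x
        rw [show ∀ y:ℝ, eval y (legendre 2) * eval y (legendre 1)
              = eval y (legendre 2) * eval y (legendre 1) from fun _ => rfl]
        rw [leg_parity 2 x, leg_parity 1 x]
        ring
      have h20 : II 2 0 = 0 := by
        have hpt : ∀ x : ℝ, (1:ℝ) * (eval x (legendre 2) * eval x (legendre 0)) =
            (3/2) * (x^2) + (-1/2) * 1 := by
          intro x
          simp [legendre]
          ring
        have hint := int_lin 1 (3/2) (-1/2) _ _ _ (by continuity) continuous_const hpt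
        unfold II
        rw [integral_pow] at hint
        simp [intervalIntegral.integral_const] at hint
        norm_num at hint
        linarith
      have h11 : II 1 1 = 2/3 := by
        have hpt : ∀ x : ℝ, eval x (legendre 1) * eval x (legendre 1) = x^2 := by
          intro x; simp [legendre]; ring
        unfold II
        simp_rw [hpt, integral_pow]
        norm_num
      refine ⟨?_, by rw [h11]; norm_num⟩
      intro m hm
      interval_cases m
      · exact h20
      · exact h21
    | (p+2) =>
      have ih1 := ih (p+1) (by omega)
      have ih0 := ih p (by omega)
      -- (a) II (p+3) m = 0 for m < p+1
      have horth_lo : ∀ m, m < p+1 → II (p+3) m = 0 := by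
        intro m hm
        have hJ : JJ (p+2) m = 0 := by
          have hexp := JJ_exp (p+2) m
          rw [ih1.1 (m+1) (by omega), ih1.1 (m-1) (by omega)] at hexp
          have h2m : (2*(m:ℝ)+1) ≠ 0 := by positivity
          have : (2*(m:ℝ)+1) * JJ (p+2) m = (2*(m:ℝ)+1) * 0 := by rw [hexp]; ring
          exact mul_left_cancel₀ h2m this
        have hrec := II_rec (p+1) m
        simp only [show p+1+2 = p+3 from rfl, show p+1+1 = p+2 from rfl] at hrec
        rw [hJ, ih0.1 m hm] at hrec
        have h3 : ((p:ℝ)+1+2) ≠ 0 := by positivity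
        have : ((p:ℝ)+1+2) * II (p+3) m = ((p:ℝ)+1+2) * 0 := by push_cast at hrec ⊢; rw [hrec]; ring
        exact mul_left_cancel₀ h3 this
      -- (b) II (p+3) (p+2) = 0
      have horth_hi : II (p+3) (p+2) = 0 := by
        have hrec := II_rec (p+1) (p+2)
        simp only [show p+1+2 = p+3 from rfl, show p+1+1 = p+2 from rfl] at hrec
        rw [JJ_diag (p+2), II_symm (p+1) (p+2), ih1.1 (p+1) (by omega)] at hrec
        have h3 : ((p:ℝ)+1+2) ≠ 0 := by positivity
        have : ((p:ℝ)+1+2) * II (p+3) (p+2) = ((p:ℝ)+1+2) * 0 := by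
          push_cast at hrec ⊢; rw [hrec]; ring
        exact mul_left_cancel₀ h3 this
      -- (c) the two linear equations
      set a := II (p+2) (p+2) with ha_def
      set b := II (p+3) (p+1) with hb_def
      -- Eq1 : boundary
      have e1 : (2*(p:ℝ)+3) * b + (2*(p:ℝ)+5) * a = 2 := by
        have hbd := int_boundary (p+2) (p+3)
        rw [leg_eval_one, leg_eval_one, leg_eval_neg_one, leg_eval_neg_one] at hbd
        have hval : ((-1:ℝ))^(p+2) * (-1)^(p+3) = -1 := by
          rw [← pow_add]
          exact Odd.neg_one_pow ⟨p+2, by ring⟩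
        rw [hval] at hbd
        -- split the integral
        have hsplit := intervalIntegral.integral_add
          (((contP (derivative (legendre (p+2)))).mul (contP (legendre (p+3)))).intervalIntegrable (μ := MeasureTheory.volume) (-1:ℝ) 1)
          (((contP (legendre (p+2))).mul (contP (derivative (legendre (p+3))))).intervalIntegrable (μ := MeasureTheory.volume) (-1:ℝ) 1)
        simp only [Pi.mul_apply] at hsplit
        rw [hsplit] at hbd
        -- first piece: ∫ dLe(p+2) * Le(p+3) = (2p+3) b
        have hfst : (∫ x in (-1:ℝ)..1, eval x (derivative (legendre (p+2))) * eval x (legendre (p+3)))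
            = (2*(p:ℝ)+3) * b := by
          have hpt : ∀ x : ℝ, (1:ℝ) * (eval x (derivative (legendre (p+2))) * eval x (legendre (p+3))) =
              (2*(p:ℝ)+3) * (eval x (legendre (p+3)) * eval x (legendre (p+1)))
              + (1:ℝ) * (eval x (legendre (p+3)) * eval x (derivative (legendre p))) := by
            intro x
            have hd := leg_DI (p+1) x
            simp only [Nat.succ_sub_one] at hd
            push_cast at hd
            linear_combination (eval x (legendre (p+3))) * hd
          have hint := int_lin 1 (2*(p:ℝ)+3) 1 _ _ _ ((contP _).mul (contP _))
            ((contP _).mul (contP _)) hpt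
          simp only [Pi.mul_apply] at hint
          have hD := int_Le_dLe p (p+3) (fun m hm => horth_lo m (by omega))
          rw [hD] at hint
          have hIIb : (∫ x in (-1:ℝ)..1, eval x (legendre (p+3)) * eval x (legendre (p+1))) = b := rfl
          rw [hIIb] at hint
          linarith [hint]
        -- second piece: ∫ Le(p+2) * dLe(p+3) = (2p+5) a
        have hsnd : (∫ x in (-1:ℝ)..1, eval x (legendre (p+2)) * eval x (derivative (legendre (p+3))))
            = (2*(p:ℝ)+5) * a := by
          have hpt : ∀ x : ℝ, (1:ℝ) * (eval x (legendre (p+2)) * eval x (derivative (legendre (p+3)))) =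
              (2*(p:ℝ)+5) * (eval x (legendre (p+2)) * eval x (legendre (p+2)))
              + (1:ℝ) * (eval x (legendre (p+2)) * eval x (derivative (legendre (p+1)))) := by
            intro x
            have hd := leg_DI (p+2) x
            simp only [Nat.succ_sub_one, show p+2+1 = p+3 from rfl] at hd
            push_cast at hd
            linear_combination (eval x (legendre (p+2))) * hd
          have hint := int_lin 1 (2*(p:ℝ)+5) 1 _ _ _ ((contP _).mul (contP _))
            ((contP _).mul (contP _)) hpt
          simp only [Pi.mul_apply] at hint
          have hD := int_Le_dLe (p+1) (p+2) (fun m hm => ih1.1 m (by omega))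
          rw [hD] at hint
          have hIIa : (∫ x in (-1:ℝ)..1, eval x (legendre (p+2)) * eval x (legendre (p+2))) = a := rfl
          rw [hIIa] at hint
          linarith [hint]
        rw [hfst, hsnd] at hbd
        linarith [hbd]
      -- Eq2 : recurrence at m = p+1
      have e2 : (2*(p:ℝ)+3) * (((p:ℝ)+3) * b) = (2*(p:ℝ)+5) * (((p:ℝ)+2) * a) - 2*((p:ℝ)+2) := by
        have hrec := II_rec (p+1) (p+1)
        simp only [show p+1+2 = p+3 from rfl, show p+1+1 = p+2 from rfl] at hrec
        have hexp := JJ_exp (p+2) (p+1)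
        simp only [Nat.succ_sub_one, show p+1+1 = p+2 from rfl] at hexp
        rw [ih1.1 p (by omega)] at hexp
        have hnorm1 := ih1.2
        push_cast at hrec hexp hnorm1
        rw [hnorm1] at hrec
        have h2p3 : (2*(p:ℝ)+3) ≠ 0 := by positivity
        -- hexp : (2(p+1)+1) JJ (p+2) (p+1) = (p+2) a + 0
        -- hrec : (p+3) b = (2p+5) JJ(p+2)(p+1) - (p+2) * (2/(2p+3))
        field_simp at hrec hexp
        nlinarith [hrec, hexp]
      have h2p5 : (2*(p:ℝ)+5) ≠ 0 := by positivity
      have ha : a = 2/(2*(p:ℝ)+5) := by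
        have h5 : (2*(p:ℝ)+5) * ((2*(p:ℝ)+5) * a) = (2*(p:ℝ)+5) * 2 := by
          linear_combination ((p:ℝ)+3) * e1 - e2
        have h6 := mul_left_cancel₀ h2p5 h5
        field_simp
        linear_combination h6
      have hb : b = 0 := by
        have h2p3 : (2*(p:ℝ)+3) ≠ 0 := by positivity
        have h7 : (2*(p:ℝ)+3) * b = (2*(p:ℝ)+3) * 0 := by
          rw [ha] at e1
          field_simp at e1
          linarith [e1]
        exact mul_left_cancel₀ h2p3 h7
      constructor
      · intro m hm
        rcases Nat.lt_trichotomy m (p+1) with h | h | h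
        · exact horth_lo m h
        · subst h; exact hb
        · have : m = p+2 := by omega
          subst this; exact horth_hi
      · rw [ha]
        push_cast
        ring_nf

lemma II_orth (i j : ℕ) (hij : i ≠ j) : II i j = 0 := by
  rcases Nat.lt_or_ge i j with h | h
  · rw [II_symm]
    obtain ⟨q, rfl⟩ : ∃ q, j = q+1 := ⟨j-1, by omega⟩
    exact (main q).1 i h
  · have hji : j < i := lt_of_le_of_ne h (Ne.symm hij)
    obtain ⟨q, rfl⟩ : ∃ q, i = q+1 := ⟨i-1, by omega⟩
    exact (main q).1 j hji

/-- The `L̃_k` are orthonormal for the `H¹₀` inner product. -/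
theorem legendreTilde_deriv_orthonormal :
    ∀ i j : ℕ, 1 ≤ i → 1 ≤ j →
      (∫ x in (-1 : ℝ)..1,
          (legendreTilde i).derivative.eval x * (legendreTilde j).derivative.eval x)
        = if i = j then 1 else 0 := by
  have hT : ∀ (k : ℕ), 1 ≤ k → ∀ x : ℝ, eval x (derivative (legendreTilde k)) =
      -((2*(k:ℝ)+1)/Real.sqrt (4*(k:ℝ)+2)) * eval x (legendre k) := by
    intro k hk x
    obtain ⟨p, rfl⟩ : ∃ p, k = p + 1 := ⟨k-1, by omega⟩
    have hDI := leg_DI (p+1) x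
    simp only [Nat.succ_sub_one, show p+1+1 = p+2 from rfl] at hDI
    simp only [legendreTilde, Nat.succ_sub_one, show p+1+1 = p+2 from rfl,
      derivative_mul, derivative_C, derivative_sub, eval_add, eval_mul, eval_sub,
      eval_C, zero_mul, eval_zero, zero_add]
    push_cast at hDI ⊢
    rw [hDI]
    have hs : Real.sqrt (4*((p:ℝ)+1)+2) ≠ 0 := by positivity
    field_simp
    ring
  intro i j hi hj
  simp_rw [hT i hi, hT j hj]
  have key : ∀ x:ℝ, (-((2*(i:ℝ)+1)/Real.sqrt (4*(i:ℝ)+2)) * eval x (legendre i)) *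
      (-((2*(j:ℝ)+1)/Real.sqrt (4*(j:ℝ)+2)) * eval x (legendre j)) =
      (((2*(i:ℝ)+1)/Real.sqrt (4*(i:ℝ)+2)) * ((2*(j:ℝ)+1)/Real.sqrt (4*(j:ℝ)+2))) *
      (eval x (legendre i) * eval x (legendre j)) := fun x => by ring
  simp_rw [key, intervalIntegral.integral_const_mul]
  have hIIdef : (∫ x in (-1:ℝ)..1, eval x (legendre i) * eval x (legendre j)) = II i j := rfl
  rw [hIIdef]
  by_cases hij : i = j
  · subst hij
    simp only [if_pos]
    rw [(main i).2]
    have h1 : Real.sqrt (4*(i:ℝ)+2) ^ 2 = 4*(i:ℝ)+2 := Real.sq_sqrt (by positivity)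
    have h2 : Real.sqrt (4*(i:ℝ)+2) ≠ 0 := by positivity
    have h3 : (2*(i:ℝ)+1) ≠ 0 := by positivity
    field_simp
    nlinarith [h1, Real.sq_sqrt (show (0:ℝ) ≤ (i:ℝ)*4+2 by positivity)]
  · rw [if_neg hij, II_orth i j hij, mul_zero]
end

section
/- For every N ≥ 2, the polynomials L̃_1, …, L̃_{N−1} form a basis of the space ℙ_N^0 of real polynomials of degree at most N vanishing at x = −1 and x = 1. -/
open Polynomial

/-- `ℙ_N^0`: real polynomials of degree at most `N` vanishing at `x = −1` and `x = 1`. -/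
noncomputable def PN0 (N : ℕ) : Submodule ℝ (Polynomial ℝ) :=
  Polynomial.degreeLE ℝ (N : ℕ) ⊓ LinearMap.ker (Polynomial.leval (-1 : ℝ)) ⊓
    LinearMap.ker (Polynomial.leval (1 : ℝ))

theorem legendre_succ_succ (k : ℕ) :
    legendre (k + 2) =
      Polynomial.C ((2 * (k : ℝ) + 3) / ((k : ℝ) + 2)) * (Polynomial.X * legendre (k + 1))
        - Polynomial.C (((k : ℝ) + 1) / ((k : ℝ) + 2)) * legendre k := by
  rw [legendre]

theorem legendre_aux : ∀ k : ℕ, 0 < (legendre k).coeff k ∧ (legendre k).natDegree ≤ k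
  | 0 => by constructor <;> simp [legendre]
  | 1 => by constructor <;> simp [legendre]
  | (k + 2) => by
    obtain ⟨h1c, h1d⟩ := legendre_aux (k + 1)
    obtain ⟨h0c, h0d⟩ := legendre_aux k
    rw [legendre_succ_succ]
    constructor
    · have hz : (legendre k).coeff (k + 2) = 0 :=
        coeff_eq_zero_of_natDegree_lt (lt_of_le_of_lt h0d (by omega))
      simp only [coeff_sub, coeff_C_mul, coeff_X_mul, hz, mul_zero, sub_zero]
      exact mul_pos (by positivity) h1c
    · refine le_trans (natDegree_sub_le _ _) (max_le ?_ ?_)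
      · refine le_trans (natDegree_C_mul_le _ _) (le_trans (natDegree_mul_le) ?_)
        rw [natDegree_X]
        omega
      · exact le_trans (natDegree_C_mul_le _ _) (by omega)

theorem legendre_natDegree (k : ℕ) : (legendre k).natDegree = k :=
  le_antisymm (legendre_aux k).2 (le_natDegree_of_ne_zero (ne_of_gt (legendre_aux k).1))

theorem legendre_eval_one : ∀ k : ℕ, (legendre k).eval 1 = 1
  | 0 => by simp [legendre]
  | 1 => by simp [legendre]
  | (k + 2) => by
    have hk : ((k : ℝ) + 2) ≠ 0 := by positivity
    rw [legendre_succ_succ]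
    simp only [eval_sub, eval_mul, eval_C, eval_X, legendre_eval_one (k + 1),
      legendre_eval_one k, one_mul, mul_one]
    field_simp
    ring

theorem legendre_eval_neg_one : ∀ k : ℕ, (legendre k).eval (-1) = (-1) ^ k
  | 0 => by simp [legendre]
  | 1 => by simp [legendre]
  | (k + 2) => by
    have hk : ((k : ℝ) + 2) ≠ 0 := by positivity
    rw [legendre_succ_succ]
    simp only [eval_sub, eval_mul, eval_C, eval_X, legendre_eval_neg_one (k + 1),
      legendre_eval_neg_one k, pow_succ]
    field_simp
    ring

theorem sqrtCoef_ne (k : ℕ) : (1 / Real.sqrt (4 * (k : ℝ) + 2)) ≠ 0 := by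
  have h : (0 : ℝ) < Real.sqrt (4 * (k : ℝ) + 2) := Real.sqrt_pos.mpr (by positivity)
  positivity

theorem legendreTilde_natDegree (k : ℕ) : (legendreTilde (k + 1)).natDegree = k + 2 := by
  unfold legendreTilde
  simp only [Nat.add_sub_cancel]
  rw [natDegree_C_mul (sqrtCoef_ne (k + 1)), natDegree_sub_eq_right_of_natDegree_lt,
    legendre_natDegree]
  rw [legendre_natDegree, legendre_natDegree]
  omega

theorem legendreTilde_ne_zero (k : ℕ) : legendreTilde (k + 1) ≠ 0 := by
  intro h
  have := legendreTilde_natDegree k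
  rw [h] at this
  simp at this

theorem legendreTilde_eval_one (k : ℕ) : (legendreTilde (k + 1)).eval 1 = 0 := by
  unfold legendreTilde
  simp [legendre_eval_one]

theorem legendreTilde_eval_neg_one (k : ℕ) : (legendreTilde (k + 1)).eval (-1) = 0 := by
  unfold legendreTilde
  simp only [Nat.add_sub_cancel, eval_mul, eval_C, eval_sub, legendre_eval_neg_one, pow_succ]
  ring

/-- A family of nonzero polynomials with strictly increasing degrees is linearly independent. -/
theorem linearIndependent_of_natDegree_strictMono {ι : Type*} [LinearOrder ι]
    (v : ι → Polynomial ℝ) (h0 : ∀ i, v i ≠ 0)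
    (hmono : StrictMono fun i => (v i).natDegree) : LinearIndependent ℝ v := by
  rw [linearIndependent_iff']
  intro s g hsum i hi
  classical
  induction s using Finset.induction_on_max generalizing g with
  | empty => exact absurd hi (Finset.notMem_empty i)
  | insert a t ha ih =>
    have hat : a ∉ t := fun h => lt_irrefl a (ha a h)
    rw [Finset.sum_insert hat] at hsum
    have hga : g a = 0 := by
      have hcoeff := congrArg (fun p : Polynomial ℝ => p.coeff (v a).natDegree) hsum
      simp only [Polynomial.coeff_add, Polynomial.finset_sum_coeff, Polynomial.coeff_zero] at hcoeff
      have hz : ∀ j ∈ t, (g j • v j).coeff (v a).natDegree = 0 := by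
        intro j hj
        rw [Polynomial.coeff_smul,
          Polynomial.coeff_eq_zero_of_natDegree_lt (hmono (ha j hj)), smul_zero]
      rw [Finset.sum_eq_zero hz, add_zero, Polynomial.coeff_smul, smul_eq_mul,
        ← Polynomial.leadingCoeff] at hcoeff
      exact (mul_eq_zero.mp hcoeff).resolve_right (Polynomial.leadingCoeff_ne_zero.mpr (h0 a))
    rcases Finset.mem_insert.mp hi with rfl | hit
    · exact hga
    · rw [hga, zero_smul, zero_add] at hsum
      exact ih g hsum hit

/-- For every `N ≥ 2`, the polynomials `L̃_1, …, L̃_{N−1}` form a basis of `ℙ_N^0`: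
they belong to `ℙ_N^0`, are linearly independent, and span `ℙ_N^0`. -/
theorem legendreTilde_basis_PN0 :
    ∀ N : ℕ, 2 ≤ N →
      (∀ i : Fin (N - 1), legendreTilde ((i : ℕ) + 1) ∈ PN0 N)
      ∧ LinearIndependent ℝ (fun i : Fin (N - 1) => legendreTilde ((i : ℕ) + 1))
      ∧ Submodule.span ℝ (Set.range fun i : Fin (N - 1) => legendreTilde ((i : ℕ) + 1))
          = PN0 N := by
  intro N hN
  have hmem : ∀ i : Fin (N - 1), legendreTilde ((i : ℕ) + 1) ∈ PN0 N := by
    intro i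
    have hi : (i : ℕ) + 2 ≤ N := by have := i.isLt; omega
    simp only [PN0, Submodule.mem_inf]
    refine ⟨⟨?_, ?_⟩, ?_⟩
    · rw [Polynomial.mem_degreeLE]
      refine le_trans degree_le_natDegree ?_
      rw [legendreTilde_natDegree]
      exact_mod_cast hi
    · rw [LinearMap.mem_ker, leval_apply]
      exact legendreTilde_eval_neg_one i
    · rw [LinearMap.mem_ker, leval_apply]
      exact legendreTilde_eval_one i
  have hli : LinearIndependent ℝ (fun i : Fin (N - 1) => legendreTilde ((i : ℕ) + 1)) := by
    refine linearIndependent_of_natDegree_strictMono _ (fun i => legendreTilde_ne_zero i) ?_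
    intro i j hij
    simp only [legendreTilde_natDegree]
    have := Fin.lt_def.mp hij
    omega
  refine ⟨hmem, hli, ?_⟩
  -- finite dimensionality of degreeLE
  have hDLfin : FiniteDimensional ℝ (Polynomial.degreeLE ℝ (N : ℕ)) := by
    rw [← Polynomial.degreeLT_succ_eq_degreeLE]
    exact Module.Finite.equiv (Polynomial.degreeLTEquiv ℝ (N + 1)).symm
  have hDLrank : Module.finrank ℝ (Polynomial.degreeLE ℝ (N : ℕ)) = N + 1 := by
    rw [← Polynomial.degreeLT_succ_eq_degreeLE,
      (Polynomial.degreeLTEquiv ℝ (N + 1)).finrank_eq]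
    simp
  have hPle : PN0 N ≤ Polynomial.degreeLE ℝ (N : ℕ) := le_trans inf_le_left inf_le_left
  have hPfin : FiniteDimensional ℝ (PN0 N) := Submodule.finiteDimensional_of_le hPle
  -- the complement spanned by 1 and X
  set W : Submodule ℝ (Polynomial ℝ) :=
    Submodule.span ℝ ({1, Polynomial.X} : Set (Polynomial ℝ)) with hW
  have hWfin : FiniteDimensional ℝ W :=
    FiniteDimensional.span_of_finite ℝ ((Set.finite_singleton _).insert _)
  have hWrank : Module.finrank ℝ W = 2 := by
    have hrange : Set.range ![(1 : Polynomial ℝ), Polynomial.X] =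
        ({1, Polynomial.X} : Set (Polynomial ℝ)) := by
      simp [Matrix.range_cons, Matrix.range_empty, Set.pair_comm]
    have hind : LinearIndependent ℝ ![(1 : Polynomial ℝ), Polynomial.X] := by
      refine linearIndependent_of_natDegree_strictMono _ ?_ ?_
      · intro i
        fin_cases i <;> simp
      · intro i j hij
        fin_cases i <;> fin_cases j <;> simp_all
    have := finrank_span_eq_card hind
    rw [hrange] at this
    rw [hW, this]
    simp
  have hinf : PN0 N ⊓ W = ⊥ := by
    rw [eq_bot_iff]
    intro p hpw
    obtain ⟨hp, hw⟩ := Submodule.mem_inf.mp hpw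
    rw [PN0, Submodule.mem_inf, Submodule.mem_inf] at hp
    obtain ⟨⟨hdeg, hm1⟩, hp1⟩ := hp
    obtain ⟨a, b, hab⟩ := Submodule.mem_span_pair.mp hw
    have he1 : p.eval 1 = 0 := by
      rwa [LinearMap.mem_ker, leval_apply] at hp1
    have hem1 : p.eval (-1) = 0 := by
      rwa [LinearMap.mem_ker, leval_apply] at hm1
    rw [← hab] at he1 hem1
    simp only [eval_add, eval_smul, eval_one, eval_X, smul_eq_mul, mul_one, mul_neg_one] at he1 hem1
    have ha : a = 0 := by linarith
    have hb : b = 0 := by linarith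
    simp [← hab, ha, hb]
  have hsup : PN0 N ⊔ W ≤ Polynomial.degreeLE ℝ (N : ℕ) := by
    refine sup_le hPle ?_
    rw [hW, Submodule.span_le]
    rintro p (rfl | rfl)
    · rw [SetLike.mem_coe, Polynomial.mem_degreeLE, Polynomial.degree_one]
      exact_mod_cast Nat.zero_le N
    · rw [SetLike.mem_coe, Polynomial.mem_degreeLE, Polynomial.degree_X]
      exact_mod_cast (by omega : 1 ≤ N)
  have hsum := Submodule.finrank_sup_add_finrank_inf_eq (PN0 N) W
  rw [hinf, hWrank] at hsum
  simp only [finrank_bot, add_zero] at hsum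
  have hle : Module.finrank ℝ ↥(PN0 N ⊔ W) ≤ N + 1 := by
    rw [← hDLrank]
    exact Submodule.finrank_mono hsup
  have hPrank : Module.finrank ℝ (PN0 N) ≤ N - 1 := by omega
  have hspanle : Submodule.span ℝ (Set.range fun i : Fin (N - 1) =>
      legendreTilde ((i : ℕ) + 1)) ≤ PN0 N :=
    Submodule.span_le.mpr (Set.range_subset_iff.mpr hmem)
  refine Submodule.eq_of_le_of_finrank_le hspanle ?_
  rw [finrank_span_eq_card hli, Fintype.card_fin]
  exact hPrank
end

section
/- Polynomial inverse trace inequality: for every natural number N and every real polynomial p of degree at most N, |p(1)|² ≤ ((N+1)²/2)·∫_{-1}^{1} p(x)² dx. -/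
open Polynomial
open Polynomial intervalIntegral Nat

noncomputable def pint (f : ℝ[X]) : ℝ := ∫ x in (-1:ℝ)..1, f.eval x

lemma pint_intable (f : ℝ[X]) : IntervalIntegrable (fun x => f.eval x) MeasureTheory.volume (-1:ℝ) 1 :=
  (f.continuous_aeval).intervalIntegrable _ _

lemma pint_derivative (f : ℝ[X]) : pint f.derivative = f.eval 1 - f.eval (-1) := by
  unfold pint
  have : (fun x => f.derivative.eval x) = deriv (fun x => f.eval x) := by
    funext x; rw [Polynomial.deriv]
  rw [this]
  exact integral_deriv_eq_sub (fun x _ => f.differentiableAt) (this ▸ pint_intable f.derivative)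

lemma pint_add (f g : ℝ[X]) : pint (f + g) = pint f + pint g := by
  unfold pint
  simp only [eval_add]
  exact integral_add (pint_intable f) (pint_intable g)

lemma pint_const_mul (c : ℝ) (f : ℝ[X]) : pint (C c * f) = c * pint f := by
  unfold pint
  simp only [eval_mul, eval_C]
  exact integral_const_mul c _

lemma pint_neg (f : ℝ[X]) : pint (-f) = - pint f := by
  have := pint_const_mul (-1) f
  simpa using this

lemma pint_sub (f g : ℝ[X]) : pint (f - g) = pint f - pint g := by
  rw [sub_eq_add_neg, pint_add, pint_neg]; ring

lemma pint_ibp (f g : ℝ[X]) :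
    pint (f.derivative * g) =
      f.eval 1 * g.eval 1 - f.eval (-1) * g.eval (-1) - pint (f * g.derivative) := by
  have h := pint_derivative (f * g)
  rw [derivative_mul, pint_add] at h
  simp only [eval_mul] at h
  linarith

lemma eval_iterate_derivative_pow_mul (n : ℕ) (a : ℝ) (g : ℝ[X]) :
    (Polynomial.derivative^[n] ((X - C a)^n * g)).eval a = (n ! : ℝ) * g.eval a := by
  induction n generalizing g with
  | zero => simp
  | succ n ih =>
    rw [Function.iterate_succ_apply]
    have hd : Polynomial.derivative ((X - C a)^(n+1) * g)
        = (X - C a)^n * (C ((n:ℝ)+1) * g + (X - C a) * Polynomial.derivative g) := by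
      rw [derivative_mul, derivative_pow]
      simp only [derivative_sub, derivative_X, derivative_C, sub_zero, mul_one]
      push_cast
      ring
    rw [hd, ih]
    simp [Nat.factorial_succ]
    ring

lemma dvd_iterate_derivative_pow_mul (k n : ℕ) (a : ℝ) (g : ℝ[X]) :
    (X - C a)^(n - k) ∣ Polynomial.derivative^[k] ((X - C a)^n * g) := by
  induction k generalizing n g with
  | zero => simpa using Dvd.intro g rfl
  | succ k ih =>
    rw [Function.iterate_succ_apply]
    cases n with
    | zero => simp
    | succ n =>
      have hd : Polynomial.derivative ((X - C a)^(n+1) * g)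
          = (X - C a)^n * (C ((n:ℝ)+1) * g + (X - C a) * Polynomial.derivative g) := by
        rw [derivative_mul, derivative_pow]
        simp only [derivative_sub, derivative_X, derivative_C, sub_zero, mul_one]
        push_cast
        ring
      rw [hd]
      simpa using ih n _

noncomputable def Uu (n : ℕ) : ℝ[X] := (X^2 - 1)^n
noncomputable def Ll (n : ℕ) : ℝ[X] := Polynomial.derivative^[n] (Uu n)

lemma Uu_eq_one (n : ℕ) : Uu n = (X - C (1:ℝ))^n * (X + 1)^n := by
  have h : (X - C (1:ℝ)) * (X + 1) = X^2 - 1 := by rw [C_1]; ring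
  rw [Uu, ← h, mul_pow]

lemma Uu_eq_neg_one (n : ℕ) : Uu n = (X - C (-1:ℝ))^n * (X - 1)^n := by
  have hc : C (-1:ℝ) = -1 := by simp
  have h : (X - C (-1:ℝ)) * (X - 1) = X^2 - 1 := by rw [hc]; ring
  rw [Uu, ← h, mul_pow]

lemma eval_iterate_deriv_Uu_one {k n : ℕ} (hk : k < n) :
    (Polynomial.derivative^[k] (Uu n)).eval 1 = 0 := by
  obtain ⟨q, hq⟩ := dvd_iterate_derivative_pow_mul k n 1 ((X + 1)^n)
  rw [Uu_eq_one, hq, eval_mul, eval_pow]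
  simp only [eval_sub, eval_X, eval_C, sub_self]
  rw [zero_pow (by omega : n - k ≠ 0), zero_mul]

lemma eval_iterate_deriv_Uu_neg_one {k n : ℕ} (hk : k < n) :
    (Polynomial.derivative^[k] (Uu n)).eval (-1) = 0 := by
  obtain ⟨q, hq⟩ := dvd_iterate_derivative_pow_mul k n (-1) ((X - 1)^n)
  rw [Uu_eq_neg_one, hq, eval_mul, eval_pow]
  simp only [eval_sub, eval_X, eval_C, sub_neg_eq_add, neg_add_cancel]
  rw [zero_pow (by omega : n - k ≠ 0), zero_mul]

lemma Ll_eval_one (n : ℕ) : (Ll n).eval 1 = 2^n * (n ! : ℝ) := by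
  have := eval_iterate_derivative_pow_mul n 1 ((X + 1)^n)
  rw [Ll, Uu_eq_one, this]
  simp [eval_pow]
  ring

lemma pint_Ll_mul (n : ℕ) (q : ℝ[X]) :
    pint (Ll n * q) = (-1:ℝ)^n * pint (Uu n * Polynomial.derivative^[n] q) := by
  suffices h : ∀ j ≤ n, pint (Ll n * q)
      = (-1:ℝ)^j * pint (Polynomial.derivative^[n-j] (Uu n) * Polynomial.derivative^[j] q) by
    simpa using h n le_rfl
  intro j hj
  induction j with
  | zero => simp [Ll]
  | succ j ih =>
    have hj' : j ≤ n := by omega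
    rw [ih hj']
    have hnj : n - j = (n - (j+1)) + 1 := by omega
    have key : pint (Polynomial.derivative^[n-j] (Uu n) * Polynomial.derivative^[j] q)
        = - pint (Polynomial.derivative^[n-(j+1)] (Uu n) * Polynomial.derivative^[j+1] q) := by
      rw [hnj, Function.iterate_succ_apply']
      rw [pint_ibp, eval_iterate_deriv_Uu_one (by omega), eval_iterate_deriv_Uu_neg_one (by omega)]
      rw [← Function.iterate_succ_apply' Polynomial.derivative j q]
      ring
    rw [key]
    ring

lemma pint_Ll_orth {n : ℕ} {q : ℝ[X]} (h : q.natDegree < n) : pint (Ll n * q) = 0 := by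
  rw [pint_Ll_mul, iterate_derivative_eq_zero h]
  simp [pint]

lemma Uu_natDegree (n : ℕ) : (Uu n).natDegree = 2 * n := by
  have h2 : (X^2 - (1:ℝ[X])).natDegree = 2 := by
    simpa using natDegree_X_pow_sub_C (n := 2) (r := (1:ℝ))
  rw [Uu, natDegree_pow, h2]; ring

lemma Uu_coeff_top (n : ℕ) : (Uu n).coeff (2 * n) = 1 := by
  have hm : (X^2 - (1:ℝ[X])).Monic := by
    simpa using monic_X_pow_sub_C (1:ℝ) (by norm_num : 2 ≠ 0)
  have := (hm.pow n).coeff_natDegree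
  rwa [← Uu, Uu_natDegree] at this

lemma Ll_natDegree_le (n : ℕ) : (Ll n).natDegree ≤ n := by
  have := natDegree_iterate_derivative (Uu n) n
  rw [Uu_natDegree] at this
  simpa [Ll, two_mul] using this

lemma Ll_coeff_top (n : ℕ) : (Ll n).coeff n = ((n + n).descFactorial n : ℝ) := by
  rw [Ll, coeff_iterate_derivative]
  rw [show n + n = 2 * n by ring, Uu_coeff_top]
  simp

lemma iterate_derivative_Ll (n : ℕ) :
    Polynomial.derivative^[n] (Ll n) = C (((2*n)! : ℝ)) := by
  rw [Ll, ← Function.iterate_add_apply]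
  have hdeg : (Polynomial.derivative^[n + n] (Uu n)).natDegree = 0 := by
    have := natDegree_iterate_derivative (Uu n) (n + n)
    rw [Uu_natDegree] at this; omega
  rw [eq_C_of_natDegree_eq_zero hdeg, coeff_iterate_derivative]
  rw [show 0 + (n + n) = 2 * n by ring, Uu_coeff_top]
  simp [Nat.descFactorial_eq_factorial_mul_choose]
  norm_num [two_mul]

noncomputable def In (n : ℕ) : ℝ := pint ((1 - X^2)^n)

lemma In_succ (n : ℕ) : (2*(n:ℝ)+3) * In (n+1) = (2*(n:ℝ)+2) * In n := by
  have hf : Polynomial.derivative (X * (1 - X^2)^(n+1))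
      = C (2*(n:ℝ)+3) * (1 - X^2)^(n+1) - C (2*(n:ℝ)+2) * (1 - X^2)^n := by
    rw [derivative_mul, derivative_pow]
    simp only [derivative_X, derivative_sub, derivative_one, derivative_pow, derivative_X,
      one_mul, mul_one, zero_sub]
    have h1 : (1 - X^2 : ℝ[X])^(n+1) = (1 - X^2)^n * (1 - X^2) := pow_succ _ _
    rw [h1]
    simp only [map_add, map_mul, map_natCast, map_ofNat, map_one]
    push_cast
    ring
  have h := pint_derivative (X * (1 - X^2)^(n+1))
  rw [hf, pint_sub, pint_const_mul, pint_const_mul] at h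
  simp only [eval_mul, eval_X, eval_pow, eval_sub, eval_one] at h
  norm_num at h
  unfold In
  linarith

lemma In_closed (n : ℕ) : In n = 2 * 4^n * ((n !:ℝ))^2 / ((2*n+1)! : ℝ) := by
  induction n with
  | zero => simp [In, pint]; norm_num
  | succ n ih =>
    have hrec := In_succ n
    have hpos : (2*(n:ℝ)+3) ≠ 0 := by positivity
    have h1 : In (n+1) = (2*(n:ℝ)+2)/(2*(n:ℝ)+3) * In n := by
      field_simp
      linarith
    rw [h1, ih]
    have hfac : ((2*(n+1)+1)! : ℝ) = (2*(n:ℝ)+3) * ((2*(n:ℝ)+2)) * ((2*n+1)! : ℝ) := by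
      have : 2*(n+1)+1 = (2*n+1) + 1 + 1 := by ring
      rw [this, Nat.factorial_succ, Nat.factorial_succ]
      push_cast
      ring
    have hfacn : (((n+1)!:ℝ)) = ((n:ℝ)+1) * (n !:ℝ) := by
      rw [Nat.factorial_succ]; push_cast; ring
    rw [hfac, hfacn]
    have hne1 : ((2*n+1)! : ℝ) ≠ 0 := by positivity
    field_simp
    ring

lemma pint_Uu (n : ℕ) : pint (Uu n) = (-1:ℝ)^n * In n := by
  have h : Uu n = C ((-1:ℝ)^n) * (1 - X^2)^n := by
    rw [Uu, map_pow, ← mul_pow]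
    congr 1
    simp only [map_neg, map_one]
    ring
  rw [h, pint_const_mul, In]

lemma pint_Ll_sq (n : ℕ) : pint (Ll n * Ll n) = ((2*n)! : ℝ) * In n := by
  rw [pint_Ll_mul, iterate_derivative_Ll]
  rw [mul_comm (Uu n), pint_const_mul, pint_Uu]
  ring_nf
  rw [pow_mul']
  norm_num

lemma Ll_sq_pos (n : ℕ) : 0 < pint (Ll n * Ll n) := by
  rw [pint_Ll_sq, In_closed]
  positivity

lemma Ll_key (n : ℕ) :
    ((Ll n).eval 1)^2 = (2*(n:ℝ)+1)/2 * pint (Ll n * Ll n) := by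
  rw [Ll_eval_one, pint_Ll_sq, In_closed]
  have hfac : ((2*n+1)! : ℝ) = (2*(n:ℝ)+1) * ((2*n)! : ℝ) := by
    rw [Nat.factorial_succ]; push_cast; ring
  rw [hfac]
  have h1 : ((2*n)! : ℝ) ≠ 0 := by positivity
  have h2 : (2*(n:ℝ)+1) ≠ 0 := by positivity
  field_simp
  rw [show ((4:ℝ))^n = (2^n)^2 by rw [← pow_mul, pow_mul']; norm_num]

lemma pint_zero : pint 0 = 0 := by simp [pint]

lemma pint_sum {ι : Type*} (s : Finset ι) (f : ι → ℝ[X]) :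
    pint (∑ i ∈ s, f i) = ∑ i ∈ s, pint (f i) := by
  classical
  induction s using Finset.induction with
  | empty => simp [pint_zero]
  | insert _ _ h ih => rw [Finset.sum_insert h, pint_add, ih, Finset.sum_insert h]

lemma Ll_span : ∀ N (p : ℝ[X]), p.natDegree ≤ N →
    ∃ c : ℕ → ℝ, p = ∑ k ∈ Finset.range (N+1), C (c k) * Ll k := by
  intro N
  induction N with
  | zero =>
    intro p hp
    refine ⟨fun _ => p.coeff 0, ?_⟩
    have : Ll 0 = 1 := by simp [Ll, Uu]
    rw [Finset.sum_range_one, this, mul_one]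
    exact (eq_C_of_natDegree_eq_zero (Nat.le_zero.mp hp))
  | succ N ih =>
    intro p hp
    set d : ℝ := (Ll (N+1)).coeff (N+1) with hd
    have hdne : d ≠ 0 := by
      rw [hd, Ll_coeff_top]
      have : (N+1+(N+1)).descFactorial (N+1) ≠ 0 := by
        rw [Ne, Nat.descFactorial_eq_zero_iff_lt]; omega
      exact_mod_cast this
    set a : ℝ := p.coeff (N+1) / d with ha
    set q : ℝ[X] := p - C a * Ll (N+1) with hq
    have hqdeg : q.natDegree ≤ N := by
      rw [natDegree_le_iff_coeff_eq_zero]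
      intro m hm
      rcases eq_or_lt_of_le (Nat.succ_le_of_lt hm) with h | h
      · rw [hq, coeff_sub, coeff_C_mul, ← h, ← hd, ha]
        field_simp
        ring
      · rw [hq, coeff_sub, coeff_C_mul,
          coeff_eq_zero_of_natDegree_lt (lt_of_le_of_lt hp h),
          coeff_eq_zero_of_natDegree_lt (lt_of_le_of_lt (Ll_natDegree_le (N+1)) h)]
        ring
    obtain ⟨c, hc⟩ := ih q hqdeg
    refine ⟨fun k => if k = N+1 then a else c k, ?_⟩
    have hrest : ∑ k ∈ Finset.range (N+1), C (if k = N+1 then a else c k) * Ll k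
        = ∑ k ∈ Finset.range (N+1), C (c k) * Ll k := by
      apply Finset.sum_congr rfl
      intro k hk
      rw [if_neg (by simp at hk; omega)]
    rw [Finset.sum_range_succ, hrest, ← hc, hq]
    simp only [ite_true, if_pos]
    ring

lemma pint_Ll_Ll {j k : ℕ} (h : j ≠ k) : pint (Ll j * Ll k) = 0 := by
  rcases lt_or_gt_of_ne h with h | h
  · rw [mul_comm]
    exact pint_Ll_orth (lt_of_le_of_lt (Ll_natDegree_le j) h)
  · exact pint_Ll_orth (lt_of_le_of_lt (Ll_natDegree_le k) h)

lemma sum_odd_real (n : ℕ) : ∑ k ∈ Finset.range n, (2*(k:ℝ)+1) = (n:ℝ)^2 := by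
  induction n with
  | zero => simp
  | succ n ih => rw [Finset.sum_range_succ, ih]; push_cast; ring


/-- Polynomial inverse trace inequality: for every polynomial `p` of degree at
most `N`, `|p(1)|² ≤ ((N+1)²/2)·∫_{-1}^1 p(x)² dx`. -/
theorem polynomial_inverse_trace_inequality :
    ∀ (N : ℕ) (p : Polynomial ℝ), p.degree ≤ N →
      (p.eval 1) ^ 2 ≤ (((N : ℝ) + 1) ^ 2 / 2) * ∫ x in (-1 : ℝ)..1, (p.eval x) ^ 2 := by
  intro N p hdeg
  obtain ⟨c, hc⟩ := Ll_span N p (natDegree_le_iff_degree_le.mpr hdeg)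
  set s := Finset.range (N+1) with hs
  set ν : ℕ → ℝ := fun k => pint (Ll k * Ll k) with hν
  have hνpos : ∀ k, 0 < ν k := Ll_sq_pos
  have hint : (∫ x in (-1:ℝ)..1, (p.eval x)^2) = pint (p * p) := by
    simp [pint, eval_mul, sq]
  have hterm : ∀ j k : ℕ, pint (C (c j) * Ll j * (C (c k) * Ll k))
      = c j * c k * pint (Ll j * Ll k) := by
    intro j k
    rw [show C (c j) * Ll j * (C (c k) * Ll k) = C (c j * c k) * (Ll j * Ll k) by
      rw [C_mul]; ring, pint_const_mul]
  have hpp : pint (p * p) = ∑ k ∈ s, (c k)^2 * ν k := by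
    conv_lhs => rw [hc, Finset.sum_mul_sum]
    rw [pint_sum]
    have : ∀ j ∈ s, (∑ k ∈ s, pint (C (c j) * Ll j * (C (c k) * Ll k)))
        = c j ^2 * ν j := by
      intro j hj
      rw [Finset.sum_eq_single j]
      · rw [hterm]; ring
      · intro k _ hk
        rw [hterm, pint_Ll_Ll (Ne.symm hk)]; ring
      · intro h; exact absurd hj h
    rw [← Finset.sum_congr rfl this]
    congr 1
    ext j
    rw [pint_sum]
  have heval : p.eval 1 = ∑ k ∈ s, c k * (Ll k).eval 1 := by
    rw [hc, eval_finset_sum]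
    simp
  set f : ℕ → ℝ := fun k => c k * Real.sqrt (ν k)
  set g : ℕ → ℝ := fun k => (Ll k).eval 1 / Real.sqrt (ν k)
  have hsqrt : ∀ k, Real.sqrt (ν k) ≠ 0 := fun k =>
    (Real.sqrt_pos.mpr (hνpos k)).ne'
  have hfg : ∀ k, f k * g k = c k * (Ll k).eval 1 := by
    intro k
    have h : f k * g k = c k * (Ll k).eval 1 * (Real.sqrt (ν k) / Real.sqrt (ν k)) := by
      simp only [f, g]; ring
    rw [h, div_self (hsqrt k), mul_one]
  have hf2 : ∀ k, f k ^ 2 = c k ^ 2 * ν k := by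
    intro k
    rw [mul_pow, Real.sq_sqrt (hνpos k).le]
  have hg2 : ∀ k, g k ^ 2 = (2*(k:ℝ)+1)/2 := by
    intro k
    rw [div_pow, Real.sq_sqrt (hνpos k).le, show ν k = pint (Ll k * Ll k) from rfl, Ll_key,
      mul_div_assoc, div_self (Ll_sq_pos k).ne', mul_one]
  have hcs := Finset.sum_mul_sq_le_sq_mul_sq s f g
  rw [show ∑ k ∈ s, f k * g k = p.eval 1 by
      rw [heval]; exact Finset.sum_congr rfl fun k _ => hfg k] at hcs
  rw [show ∑ k ∈ s, f k ^ 2 = pint (p * p) by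
      rw [hpp]; exact Finset.sum_congr rfl fun k _ => hf2 k] at hcs
  rw [show ∑ k ∈ s, g k ^ 2 = ((N:ℝ)+1)^2/2 by
      rw [Finset.sum_congr rfl fun k _ => hg2 k, ← Finset.sum_div, sum_odd_real]
      push_cast; ring] at hcs
  rw [hint]
  linarith
end
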